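/- arXiv:1505.02372 — 2 statements merged into one kernel-verified Lean document; each statement's English description precedes it below -/
import Mathlib

section
/- For each n, let c_n : 𝔹^n → 𝔹^{2^n} be the transformation sending x to the tuple of all conjunctions x₁^{a₁} ∧ ⋯ ∧ x_n^{a_n} over a ∈ 𝔹^n, where x^1 = x and x^0 = ¬x. There exists a family of reversible circuits (S_n) over NOT, CNOT and C²NOT gates and a sequence q(n) such that S_n implements c_n with q(n) additional inputs and, as n → ∞, L(S_n) ~ 2^n and q(n) ~ 2^n. -/
open Filter

namespace Rev

/-- A reversible gate `TOF(I; t)` on `N` lines: a control set `I` with `|I| ≤ 2`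
and a target `t ∉ I`.  `|I| = 0, 1, 2` correspond to NOT, CNOT, C²NOT. -/
structure Gate (N : ℕ) where
  I : Finset (Fin N)
  t : Fin N
  card_le : I.card ≤ 2
  t_not_mem : t ∉ I

/-- The transformation computed by a gate: the target coordinate is XORed with the
conjunction of the control coordinates (the empty conjunction is `1`). -/
def Gate.apply {N : ℕ} (g : Gate N) (x : Fin N → Bool) : Fin N → Bool :=
  fun j => if j = g.t then xor (x g.t) (decide (∀ i ∈ g.I, x i = true)) else x j

/-- A reversible circuit: a finite sequence (composition) of gates. -/
abbrev Circuit (N : ℕ) := List (Gate N)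

/-- The transformation computed by a circuit (composition of the gate maps). -/
def Circuit.eval {N : ℕ} (S : Circuit N) (x : Fin N → Bool) : Fin N → Bool :=
  S.foldl (fun v g => g.apply v) x

/-- Gate complexity: the number of gates. -/
def Circuit.L {N : ℕ} (S : Circuit N) : ℕ := S.length

/-- The number of NOT and CNOT gates. -/
def Circuit.LC {N : ℕ} (S : Circuit N) : ℕ := (S.filter fun g => g.I.card ≤ 1).length

/-- The number of C²NOT (Toffoli) gates. -/
def Circuit.LT {N : ℕ} (S : Circuit N) : ℕ := (S.filter fun g => g.I.card = 2).length

/-- The quantum weight, given weights `WC` for NOT/CNOT gates and `WT` for C²NOT gates. -/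
noncomputable def Circuit.W {N : ℕ} (WC WT : ℝ) (S : Circuit N) : ℝ :=
  WC * S.LC + WT * S.LT

/-- A circuit has depth one if the sets `{t} ∪ I` of its gates are pairwise disjoint. -/
def DepthOne {N : ℕ} (S : Circuit N) : Prop :=
  S.Pairwise fun g₁ g₂ => Disjoint (insert g₁.t g₁.I) (insert g₂.t g₂.I)

/-- The depth of a circuit: the minimal number of depth-one sub-circuits whose
concatenation is the circuit. -/
noncomputable def Circuit.D {N : ℕ} (S : Circuit N) : ℕ :=
  sInf {d | ∃ parts : List (Circuit N),
    parts.length = d ∧ parts.flatten = S ∧ ∀ p ∈ parts, DepthOne p}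

/-- Padding an input vector with zero values on `q` additional inputs. -/
def pad {n q : ℕ} (x : Fin n → Bool) : Fin (n + q) → Bool :=
  fun i => if h : (i : ℕ) < n then x ⟨i, h⟩ else false

/-- A circuit `S` with `n + q` inputs implements `f : 𝔹ⁿ → 𝔹ᵐ` with `q` additional
inputs: there is a permutation `π` of the output positions such that for every `x`,
applying `S` to `⟨x, 0, …, 0⟩` and permuting the coordinates by `π` yields a vector
whose first `m` coordinates equal `f x`. -/
def Implements {n q m : ℕ} (S : Circuit (n + q)) (f : (Fin n → Bool) → Fin m → Bool) :
    Prop :=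
  m ≤ n + q ∧ ∃ π : Equiv.Perm (Fin (n + q)), ∀ x : Fin n → Bool, ∀ j : Fin m,
    ∀ hj : (j : ℕ) < n + q, Circuit.eval S (pad x) (π ⟨j, hj⟩) = f x j

/-- `f ∈ F(n, q)`: `f : 𝔹ⁿ → 𝔹ⁿ` is implementable with `q` additional inputs. -/
def Implementable (n q : ℕ) (f : (Fin n → Bool) → Fin n → Bool) : Prop :=
  ∃ S : Circuit (n + q), Implements S f

/-- `L(f, q)`: minimal gate complexity of a circuit implementing `f` with `q`
additional inputs. -/
noncomputable def Lmin (n q : ℕ) (f : (Fin n → Bool) → Fin n → Bool) : ℕ :=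
  sInf {l | ∃ S : Circuit (n + q), Implements S f ∧ S.L = l}

/-- The Shannon gate complexity function `L(n, q)`. -/
noncomputable def Lsh (n q : ℕ) : ℕ :=
  sSup {l | ∃ f, Implementable n q f ∧ Lmin n q f = l}

/-- `D(f, q)`: minimal depth of a circuit implementing `f` with `q` additional inputs. -/
noncomputable def Dmin (n q : ℕ) (f : (Fin n → Bool) → Fin n → Bool) : ℕ :=
  sInf {d | ∃ S : Circuit (n + q), Implements S f ∧ S.D = d}

/-- The Shannon depth function `D(n, q)`. -/
noncomputable def Dsh (n q : ℕ) : ℕ :=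
  sSup {d | ∃ f, Implementable n q f ∧ Dmin n q f = d}

/-- `W(f, q)`: minimal quantum weight of a circuit implementing `f` with `q`
additional inputs. -/
noncomputable def Wmin (WC WT : ℝ) (n q : ℕ) (f : (Fin n → Bool) → Fin n → Bool) : ℝ :=
  sInf {w | ∃ S : Circuit (n + q), Implements S f ∧ Circuit.W WC WT S = w}

/-- The Shannon quantum weight function `W(n, q)`. -/
noncomputable def Wsh (WC WT : ℝ) (n q : ℕ) : ℝ :=
  sSup {w | ∃ f, Implementable n q f ∧ Wmin WC WT n q f = w}

/-- `a ~ b`: `a n / b n → 1`. -/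
def AsympEquiv (a b : ℕ → ℝ) : Prop :=
  Tendsto (fun n => a n / b n) atTop (nhds 1)

/-- `a ≲ b`: `limsup (a n / b n) ≤ 1`. -/
def AsympLE (a b : ℕ → ℝ) : Prop :=
  Filter.limsup (fun n => a n / b n) atTop ≤ 1

/-- A growing function: nondecreasing and tending to `+∞`. -/
def Growing (φ : ℕ → ℝ) : Prop :=
  Monotone φ ∧ Tendsto φ atTop atTop

/-- `2 ^ (n - ⌈n / φ(n)⌉)` as a real number. -/
noncomputable def pow2e (φ : ℕ → ℝ) (n : ℕ) : ℝ :=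
  (2 : ℝ) ^ ((n : ℤ) - ⌈(n : ℝ) / φ n⌉)

end Rev

namespace Rev

/-- `c_n : 𝔹ⁿ → 𝔹^{2ⁿ}`: the tuple of all conjunctions `x₁^{a₁} ∧ ⋯ ∧ x_n^{a_n}`,
the index `j : Fin (2 ^ n)` encoding `a ∈ 𝔹ⁿ` via its binary digits. -/
def conjAll (n : ℕ) : (Fin n → Bool) → Fin (2 ^ n) → Bool :=
  fun x j => decide (∀ i : Fin n, x i = (j : ℕ).testBit i.val)

-- smart constructors
def mkNot {N : ℕ} (t : Fin N) : Gate N := ⟨∅, t, by simp, by simp⟩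

def mkCnot {N : ℕ} (c t : Fin N) : Gate N :=
  if h : t ∈ ({c} : Finset (Fin N)) then ⟨∅, t, by simp, by simp⟩
  else ⟨{c}, t, by simp, h⟩

def mkTof {N : ℕ} (c₁ c₂ t : Fin N) : Gate N :=
  if h : t ∈ ({c₁, c₂} : Finset (Fin N)) then ⟨∅, t, by simp, by simp⟩
  else ⟨{c₁, c₂}, t, le_trans (Finset.card_insert_le _ _) (by simp), h⟩

@[simp] lemma mkNot_t {N : ℕ} (t : Fin N) : (mkNot t).t = t := rfl
@[simp] lemma mkNot_I {N : ℕ} (t : Fin N) : (mkNot t).I = ∅ := rfl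

@[simp] lemma mkCnot_t {N : ℕ} (c t : Fin N) : (mkCnot c t).t = t := by
  unfold mkCnot; split <;> rfl

lemma mkCnot_I {N : ℕ} {c t : Fin N} (h : t ≠ c) : (mkCnot c t).I = {c} := by
  unfold mkCnot; rw [dif_neg (by simpa using h)]

@[simp] lemma mkTof_t {N : ℕ} (c₁ c₂ t : Fin N) : (mkTof c₁ c₂ t).t = t := by
  unfold mkTof; split <;> rfl

lemma mkTof_I {N : ℕ} {c₁ c₂ t : Fin N} (h₁ : t ≠ c₁) (h₂ : t ≠ c₂) :
    (mkTof c₁ c₂ t).I = {c₁, c₂} := by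
  unfold mkTof; rw [dif_neg (by simp [h₁, h₂])]

lemma eval_append {N : ℕ} (S₁ S₂ : Circuit N) (x : Fin N → Bool) :
    Circuit.eval (S₁ ++ S₂) x = Circuit.eval S₂ (Circuit.eval S₁ x) := by
  simp [Circuit.eval, List.foldl_append]

lemma eval_untouched {N : ℕ} (S : Circuit N) (x : Fin N → Bool) (ℓ : Fin N)
    (h : ∀ g ∈ S, g.t ≠ ℓ) : Circuit.eval S x ℓ = x ℓ := by
  induction S generalizing x with
  | nil => rfl
  | cons g rest ih =>
    show Circuit.eval rest (g.apply x) ℓ = x ℓ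
    rw [ih _ (fun g' hg' => h g' (List.mem_cons_of_mem _ hg'))]
    simp only [Gate.apply]
    rw [if_neg (by exact fun hc => h g (List.mem_cons_self) (hc ▸ rfl))]

lemma eval_parallel {N : ℕ} (S : Circuit N) (x : Fin N → Bool)
    (hT : S.Pairwise fun g g' => g.t ≠ g'.t)
    (hC : ∀ g ∈ S, ∀ g' ∈ S, g.t ∉ g'.I)
    (g : Gate N) (hg : g ∈ S) :
    Circuit.eval S x g.t = xor (x g.t) (decide (∀ i ∈ g.I, x i = true)) := by
  induction S generalizing x with
  | nil => cases hg
  | cons g₀ rest ih =>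
    rcases List.mem_cons.1 hg with rfl | hg'
    · show Circuit.eval rest (g.apply x) g.t = _
      rw [eval_untouched _ _ _ (fun g' hg' =>
        ((List.pairwise_cons.1 hT).1 g' hg').symm)]
      simp [Gate.apply]
    · show Circuit.eval rest (g₀.apply x) g.t = _
      have hne : g₀.t ≠ g.t := (List.pairwise_cons.1 hT).1 g hg'
      have h1 : (g₀.apply x) g.t = x g.t := by
        simp only [Gate.apply]; rw [if_neg (fun hc : g.t = g₀.t => hne hc.symm)]
      have h2 : ∀ i ∈ g.I, (g₀.apply x) i = x i := by
        intro i hi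
        have : g₀.t ∉ g.I := hC g₀ (List.mem_cons_self) g hg
        simp only [Gate.apply]
        rw [if_neg (fun hc : i = g₀.t => this (hc ▸ hi))]
      rw [ih (g₀.apply x) (List.pairwise_cons.1 hT).2
        (fun a ha b hb => hC a (List.mem_cons_of_mem _ ha) b (List.mem_cons_of_mem _ hb))
        hg', h1]
      congr 1
      rw [decide_eq_decide]
      exact forall₂_congr (fun i hi => by rw [h2 i hi])


/-! ### The doubling builder -/

def lvlGates {N : ℕ} (xl : ℕ → Fin N) (L : ℕ → ℕ → Fin N) (k : ℕ) : Circuit N :=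
  ((List.range (2 ^ k)).map fun u => mkCnot (L k u) (L (k + 1) u)) ++
  ((List.range (2 ^ (k + 1))).map fun u => mkTof (L k (u % 2 ^ k)) (xl k) (L (k + 1) u))

def build {N : ℕ} (xl : ℕ → Fin N) (L : ℕ → ℕ → Fin N) : ℕ → Circuit N
  | 0 => [mkNot (L 0 0)]
  | k + 1 => build xl L k ++ lvlGates xl L k

lemma build_length {N : ℕ} (xl : ℕ → Fin N) (L : ℕ → ℕ → Fin N) (m : ℕ) :
    (build xl L m).length = 3 * 2 ^ m - 2 := by
  induction m with
  | zero => rfl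
  | succ k ih =>
    have h : (0:ℕ) < 2 ^ k := Nat.pow_pos (by norm_num)
    have h2 : (2:ℕ) ^ (k + 1) = 2 ^ k + 2 ^ k := by rw [pow_succ]; ring
    rw [build]
    simp only [List.length_append, lvlGates, List.length_map, List.length_range, ih]
    omega

lemma conj_succ (f : ℕ → Bool) (k u : ℕ) (hu : u < 2 ^ (k + 1)) :
    decide (∀ i < k + 1, f i = Nat.testBit u i) =
    xor (if u < 2 ^ k then decide (∀ i < k, f i = Nat.testBit (u % 2 ^ k) i) else false)
        (decide (∀ i < k, f i = Nat.testBit (u % 2 ^ k) i) && f k) := by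
  have hp : (0:ℕ) < 2 ^ k := Nat.pow_pos (by norm_num)
  have hps : (2:ℕ) ^ (k + 1) = 2 ^ k + 2 ^ k := by rw [pow_succ]; ring
  have hd2 : u / 2 ^ k < 2 := (Nat.div_lt_iff_lt_mul hp).2 (by omega)
  have hbitk : Nat.testBit u k = decide (2 ^ k ≤ u) := by
    rw [Nat.testBit_eq_decide_div_mod_eq, Nat.mod_eq_of_lt hd2, decide_eq_decide,
      ← Nat.one_le_div_iff hp]
    omega
  have hmod : ∀ i < k, Nat.testBit (u % 2 ^ k) i = Nat.testBit u i := by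
    intro i hi; rw [Nat.testBit_mod_two_pow]; simp [hi]
  have hsplit : (∀ i < k + 1, f i = Nat.testBit u i) ↔
      ((∀ i < k, f i = Nat.testBit (u % 2 ^ k) i) ∧ f k = Nat.testBit u k) := by
    constructor
    · intro h; exact ⟨fun i hi => by rw [hmod i hi]; exact h i (by omega), h k (by omega)⟩
    · rintro ⟨h1, h2⟩ i hi
      rcases Nat.lt_succ_iff_lt_or_eq.1 hi with hi' | rfl
      · rw [← hmod i hi']; exact h1 i hi'
      · exact h2
  rw [decide_eq_decide.2 hsplit, Bool.decide_and, hbitk]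
  by_cases ht : 2 ^ k ≤ u
  · simp only [ht, decide_eq_true ht, if_neg (by omega : ¬ u < 2 ^ k)]
    cases hc : decide (∀ i < k, f i = Nat.testBit (u % 2 ^ k) i) <;> cases hk : f k <;> simp
  · simp only [ht, decide_eq_false ht, if_pos (by omega : u < 2 ^ k)]
    cases hc : decide (∀ i < k, f i = Nat.testBit (u % 2 ^ k) i) <;> cases hk : f k <;> simp

lemma pairwise_range_map {α : Type*} (n : ℕ) (f : ℕ → α) (R : α → α → Prop)
    (h : ∀ i j, i < j → j < n → R (f i) (f j)) : ((List.range n).map f).Pairwise R := by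
  rw [List.pairwise_map]
  exact List.Pairwise.imp_of_mem
    (fun {a b} ha hb hab => h a b hab (List.mem_range.1 hb)) (List.pairwise_lt_range)

lemma mem_range_map {α : Type*} {n : ℕ} {f : ℕ → α} {g : α} :
    g ∈ (List.range n).map f ↔ ∃ u, u < n ∧ g = f u := by
  simp [List.mem_map, List.mem_range, eq_comm]

theorem build_spec {N : ℕ} (xl : ℕ → Fin N) (L : ℕ → ℕ → Fin N) (v : Fin N → Bool) :
    ∀ m : ℕ,
    (∀ k, k ≤ m → ∀ w, w < 2 ^ k → ∀ k', k' ≤ m → ∀ w', w' < 2 ^ k' →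
      L k w = L k' w' → k = k' ∧ w = w') →
    (∀ i, i < m → ∀ k, k ≤ m → ∀ w, w < 2 ^ k → xl i ≠ L k w) →
    (∀ k, k ≤ m → ∀ w, w < 2 ^ k → v (L k w) = false) →
    (∀ w, w < 2 ^ m → Circuit.eval (build xl L m) v (L m w)
        = decide (∀ i < m, v (xl i) = Nat.testBit w i)) ∧
    (∀ ℓ : Fin N, (∀ k, k ≤ m → ∀ w, w < 2 ^ k → ℓ ≠ L k w) →
      Circuit.eval (build xl L m) v ℓ = v ℓ) := by
  intro m
  induction m with
  | zero =>
    intro hL hx hz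
    constructor
    · intro w hw
      interval_cases w
      show (mkNot (L 0 0)).apply v (L 0 0) = _
      simp [Gate.apply, hz 0 le_rfl 0 (by norm_num)]
    · intro ℓ hℓ
      show (mkNot (L 0 0)).apply v ℓ = v ℓ
      simp only [Gate.apply]
      rw [if_neg]
      exact fun hc => hℓ 0 le_rfl 0 (by norm_num) hc
  | succ m ih =>
    intro hL hx hz
    have hLw : ∀ k, k ≤ m → ∀ w, w < 2 ^ k → ∀ k', k' ≤ m → ∀ w', w' < 2 ^ k' →
        L k w = L k' w' → k = k' ∧ w = w' :=
      fun k hk w hw k' hk' w' hw' => hL k (by omega) w hw k' (by omega) w' hw'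
    obtain ⟨A1, A2⟩ := ih hLw
      (fun i hi k hk w hw => hx i (by omega) k (by omega) w hw)
      (fun k hk w hw => hz k (by omega) w hw)
    set v1 := Circuit.eval (build xl L m) v with hv1
    have hpm : (0:ℕ) < 2 ^ m := Nat.pow_pos (by norm_num)
    have hps : (2:ℕ) ^ (m + 1) = 2 ^ m + 2 ^ m := by rw [pow_succ]; ring
    -- distinctness shortcuts
    have hne1 : ∀ u u', u < 2 ^ (m+1) → u' < 2 ^ m → L (m+1) u ≠ L m u' := by
      intro u u' hu hu' hc
      exact absurd (hL (m+1) le_rfl u hu m (by omega) u' hu' hc).1 (by omega)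
    have hne2 : ∀ u u', u < 2 ^ (m+1) → u' < 2 ^ (m+1) → u ≠ u' → L (m+1) u ≠ L (m+1) u' := by
      intro u u' hu hu' huu hc
      exact absurd (hL (m+1) le_rfl u hu (m+1) le_rfl u' hu' hc).2 huu
    have hnex : ∀ u, u < 2 ^ (m+1) → L (m+1) u ≠ xl m :=
      fun u hu hc => (hx m (by omega) (m+1) le_rfl u hu) hc.symm
    -- values of v1
    have A3 : ∀ u, u < 2 ^ (m+1) → v1 (L (m+1) u) = false := by
      intro u hu
      rw [A2 _ (fun k hk w hw hc => absurd (hL (m+1) le_rfl u hu k (by omega) w hw hc).1 (by omega))]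
      exact hz (m+1) le_rfl u hu
    have A4 : ∀ i, i < m + 1 → v1 (xl i) = v (xl i) := by
      intro i hi
      exact A2 _ (fun k hk w hw => hx i (by omega) k (by omega) w hw)
    -- phase 1 : CNOTs
    set P1 : Circuit N := (List.range (2 ^ m)).map
      (fun u => mkCnot (L m u) (L (m+1) u)) with hP1
    set v2 := Circuit.eval P1 v1 with hv2
    have hT1 : P1.Pairwise fun g g' => g.t ≠ g'.t := by
      apply pairwise_range_map
      intro i j hij hj
      simpa using hne2 i j (by omega) (by omega) (by omega)
    have hC1 : ∀ g ∈ P1, ∀ g' ∈ P1, g.t ∉ g'.I := by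
      intro g hg g' hg'
      obtain ⟨u, hu, rfl⟩ := mem_range_map.1 hg
      obtain ⟨u', hu', rfl⟩ := mem_range_map.1 hg'
      rw [mkCnot_t, mkCnot_I (hne1 u' u' (by omega) hu')]
      simp only [Finset.mem_singleton]
      exact hne1 u u' (by omega) hu'
    have B1 : ∀ u, u < 2 ^ m → v2 (L (m+1) u) = v1 (L m u) := by
      intro u hu
      have hg : mkCnot (L m u) (L (m+1) u) ∈ P1 := mem_range_map.2 ⟨u, hu, rfl⟩
      have := eval_parallel P1 v1 hT1 hC1 _ hg
      rw [mkCnot_t, mkCnot_I (hne1 u u (by omega) hu)] at this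
      rw [hv2, this, A3 u (by omega)]
      simp
    have B2 : ∀ ℓ : Fin N, (∀ u, u < 2 ^ m → ℓ ≠ L (m+1) u) → v2 ℓ = v1 ℓ := by
      intro ℓ hℓ
      apply eval_untouched
      intro g hg
      obtain ⟨u, hu, rfl⟩ := mem_range_map.1 hg
      rw [mkCnot_t]
      exact fun hc => hℓ u hu hc.symm
    -- phase 2 : Toffolis
    set P2 : Circuit N := (List.range (2 ^ (m+1))).map
      (fun u => mkTof (L m (u % 2 ^ m)) (xl m) (L (m+1) u)) with hP2
    set v3 := Circuit.eval P2 v2 with hv3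
    have hT2 : P2.Pairwise fun g g' => g.t ≠ g'.t := by
      apply pairwise_range_map
      intro i j hij hj
      simpa using hne2 i j (by omega) (by omega) (by omega)
    have hC2 : ∀ g ∈ P2, ∀ g' ∈ P2, g.t ∉ g'.I := by
      intro g hg g' hg'
      obtain ⟨u, hu, rfl⟩ := mem_range_map.1 hg
      obtain ⟨u', hu', rfl⟩ := mem_range_map.1 hg'
      rw [mkTof_t, mkTof_I (hne1 u' _ hu' (Nat.mod_lt _ hpm)) (hnex u' hu')]
      simp only [Finset.mem_insert, Finset.mem_singleton]
      push_neg
      exact ⟨hne1 u _ hu (Nat.mod_lt _ hpm), hnex u hu⟩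
    have C1 : ∀ u, u < 2 ^ (m+1) → v3 (L (m+1) u)
        = xor (v2 (L (m+1) u)) (v2 (L m (u % 2 ^ m)) && v2 (xl m)) := by
      intro u hu
      have hg : mkTof (L m (u % 2 ^ m)) (xl m) (L (m+1) u) ∈ P2 := mem_range_map.2 ⟨u, hu, rfl⟩
      have := eval_parallel P2 v2 hT2 hC2 _ hg
      rw [mkTof_t, mkTof_I (hne1 u _ hu (Nat.mod_lt _ hpm)) (hnex u hu)] at this
      rw [hv3, this]
      congr 1
      simp [Finset.forall_mem_insert]
    have C2 : ∀ ℓ : Fin N, (∀ u, u < 2 ^ (m+1) → ℓ ≠ L (m+1) u) → v3 ℓ = v2 ℓ := by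
      intro ℓ hℓ
      apply eval_untouched
      intro g hg
      obtain ⟨u, hu, rfl⟩ := mem_range_map.1 hg
      rw [mkTof_t]
      exact fun hc => hℓ u hu hc.symm
    -- unfolding the build
    have hunfold : Circuit.eval (build xl L (m+1)) v = v3 := by
      rw [hv3, hv2, hv1, build, lvlGates, ← List.append_assoc, eval_append, eval_append]
    constructor
    · intro w hw
      rw [hunfold, C1 w hw]
      have hLmw : v2 (L m (w % 2 ^ m)) = v1 (L m (w % 2 ^ m)) := by
        apply B2
        intro u hu
        exact (hne1 u (w % 2 ^ m) (by omega) (Nat.mod_lt _ hpm)).symm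
      have hxm : v2 (xl m) = v (xl m) := by
        rw [B2 _ (fun u hu => hx m (by omega) (m+1) le_rfl u (by omega))]
        exact A4 m (by omega)
      rw [hLmw, A1 _ (Nat.mod_lt _ hpm), hxm,
        conj_succ (fun i => v (xl i)) m w hw]
      congr 1
      by_cases hwm : w < 2 ^ m
      · rw [if_pos hwm, B1 w hwm, A1 w hwm, Nat.mod_eq_of_lt hwm]
      · rw [if_neg hwm, B2, A3 w hw]
        intro u hu
        exact hne2 w u hw (by omega) (by omega)
    · intro ℓ hℓ
      rw [hunfold, C2 ℓ (fun u hu => hℓ (m+1) le_rfl u hu),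
        B2 ℓ (fun u hu => hℓ (m+1) le_rfl u (by omega)),
        A2 ℓ (fun k hk w hw => hℓ k (by omega) w hw)]

/-! ### Concrete layout -/

def an (n : ℕ) : ℕ := n / 2
def bn (n : ℕ) : ℕ := n - n / 2
def qn (n : ℕ) : ℕ := 2 ^ n + 2 ^ (an n + 1) + 2 ^ (bn n + 1)
abbrev Nn (n : ℕ) : ℕ := n + qn n

lemma ab_add (n : ℕ) : an n + bn n = n := by
  have := Nat.div_le_self n 2
  unfold an bn; omega

lemma Nn_pos (n : ℕ) : 0 < Nn n := by
  have : (0:ℕ) < 2 ^ an n := Nat.pow_pos (by norm_num)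
  have : (0:ℕ) < 2 ^ bn n := Nat.pow_pos (by norm_num)
  have : (0:ℕ) < 2 ^ n := Nat.pow_pos (by norm_num)
  unfold Nn qn; omega

def mfin (n m : ℕ) : Fin (Nn n) := ⟨m % Nn n, Nat.mod_lt _ (Nn_pos n)⟩

lemma mfin_val {n m : ℕ} (h : m < Nn n) : ((mfin n m) : ℕ) = m := Nat.mod_eq_of_lt h

def lA (n k w : ℕ) : ℕ := n + (2 ^ k - 1) + w
def lB (n k w : ℕ) : ℕ := n + 2 ^ (an n + 1) + (2 ^ k - 1) + w
def lC (n j : ℕ) : ℕ := n + 2 ^ (an n + 1) + 2 ^ (bn n + 1) + j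

def fA (n k w : ℕ) : Fin (Nn n) := mfin n (lA n k w)
def fB (n k w : ℕ) : Fin (Nn n) := mfin n (lB n k w)
def fC (n j : ℕ) : Fin (Nn n) := mfin n (lC n j)
def xA (n i : ℕ) : Fin (Nn n) := mfin n i
def xB (n i : ℕ) : Fin (Nn n) := mfin n (an n + i)

lemma lA_bound {n k w : ℕ} (hk : k ≤ an n) (hw : w < 2 ^ k) :
    n ≤ lA n k w ∧ lA n k w < n + 2 ^ (an n + 1) := by
  have e1 : (2:ℕ) ^ k + 2 ^ k = 2 ^ (k + 1) := by rw [pow_succ]; ring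
  have e2 : (2:ℕ) ^ (k + 1) ≤ 2 ^ (an n + 1) := Nat.pow_le_pow_right (by norm_num) (by omega)
  have e3 : (0:ℕ) < 2 ^ k := Nat.pow_pos (by norm_num)
  unfold lA; omega

lemma lB_bound {n k w : ℕ} (hk : k ≤ bn n) (hw : w < 2 ^ k) :
    n + 2 ^ (an n + 1) ≤ lB n k w ∧ lB n k w < n + 2 ^ (an n + 1) + 2 ^ (bn n + 1) := by
  have e1 : (2:ℕ) ^ k + 2 ^ k = 2 ^ (k + 1) := by rw [pow_succ]; ring
  have e2 : (2:ℕ) ^ (k + 1) ≤ 2 ^ (bn n + 1) := Nat.pow_le_pow_right (by norm_num) (by omega)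
  have e3 : (0:ℕ) < 2 ^ k := Nat.pow_pos (by norm_num)
  unfold lB; omega

lemma lC_bound {n j : ℕ} (hj : j < 2 ^ n) :
    n + 2 ^ (an n + 1) + 2 ^ (bn n + 1) ≤ lC n j ∧ lC n j < Nn n := by
  unfold lC Nn qn; omega

lemma lA_lt {n k w : ℕ} (hk : k ≤ an n) (hw : w < 2 ^ k) : lA n k w < Nn n := by
  have h1 := (lA_bound hk hw).2
  have : (0:ℕ) < 2 ^ n := Nat.pow_pos (by norm_num)
  have : (0:ℕ) < 2 ^ (bn n + 1) := Nat.pow_pos (by norm_num)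
  unfold Nn qn; omega

lemma lB_lt {n k w : ℕ} (hk : k ≤ bn n) (hw : w < 2 ^ k) : lB n k w < Nn n := by
  have h1 := (lB_bound hk hw).2
  have : (0:ℕ) < 2 ^ n := Nat.pow_pos (by norm_num)
  unfold Nn qn; omega

lemma lvl_inj {k w k' w' : ℕ} (hw : w < 2 ^ k) (hw' : w' < 2 ^ k')
    (h : 2 ^ k - 1 + w = 2 ^ k' - 1 + w') : k = k' ∧ w = w' := by
  have h0 : (0:ℕ) < 2 ^ k := Nat.pow_pos (by norm_num)
  have h0' : (0:ℕ) < 2 ^ k' := Nat.pow_pos (by norm_num)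
  rcases lt_trichotomy k k' with hlt | rfl | hgt
  · have h2 : 2 ^ k + 2 ^ k ≤ 2 ^ k' := by
      calc (2:ℕ) ^ k + 2 ^ k = 2 ^ (k + 1) := by rw [pow_succ]; ring
      _ ≤ 2 ^ k' := Nat.pow_le_pow_right (by norm_num) hlt
    omega
  · omega
  · have h2 : 2 ^ k' + 2 ^ k' ≤ 2 ^ k := by
      calc (2:ℕ) ^ k' + 2 ^ k' = 2 ^ (k' + 1) := by rw [pow_succ]; ring
      _ ≤ 2 ^ k := Nat.pow_le_pow_right (by norm_num) hgt
    omega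

lemma fA_inj (n : ℕ) : ∀ k, k ≤ an n → ∀ w, w < 2 ^ k → ∀ k', k' ≤ an n → ∀ w', w' < 2 ^ k' →
    fA n k w = fA n k' w' → k = k' ∧ w = w' := by
  intro k hk w hw k' hk' w' hw' h
  have hv := congrArg Fin.val h
  rw [fA, fA, mfin_val (lA_lt hk hw), mfin_val (lA_lt hk' hw')] at hv
  exact lvl_inj hw hw' (by unfold lA at hv; omega)

lemma fB_inj (n : ℕ) : ∀ k, k ≤ bn n → ∀ w, w < 2 ^ k → ∀ k', k' ≤ bn n → ∀ w', w' < 2 ^ k' →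
    fB n k w = fB n k' w' → k = k' ∧ w = w' := by
  intro k hk w hw k' hk' w' hw' h
  have hv := congrArg Fin.val h
  rw [fB, fB, mfin_val (lB_lt hk hw), mfin_val (lB_lt hk' hw')] at hv
  exact lvl_inj hw hw' (by unfold lB at hv; omega)

lemma xA_val {n i : ℕ} (hi : i < n) : ((xA n i) : ℕ) = i := by
  have : (0:ℕ) < 2 ^ an n := Nat.pow_pos (by norm_num)
  have : (0:ℕ) < 2 ^ bn n := Nat.pow_pos (by norm_num)
  have : (0:ℕ) < 2 ^ n := Nat.pow_pos (by norm_num)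
  exact mfin_val (by unfold Nn qn; omega)

lemma xB_val {n i : ℕ} (hi : i < bn n) : ((xB n i) : ℕ) = an n + i := by
  have : (0:ℕ) < 2 ^ an n := Nat.pow_pos (by norm_num)
  have : (0:ℕ) < 2 ^ bn n := Nat.pow_pos (by norm_num)
  have h := ab_add n
  have : (0:ℕ) < 2 ^ n := Nat.pow_pos (by norm_num)
  exact mfin_val (by unfold Nn qn; omega)

lemma xA_ne (n : ℕ) : ∀ i, i < an n → ∀ k, k ≤ an n → ∀ w, w < 2 ^ k → xA n i ≠ fA n k w := by
  intro i hi k hk w hw h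
  have hv := congrArg Fin.val h
  have hab := ab_add n
  rw [xA_val (by omega), fA, mfin_val (lA_lt hk hw)] at hv
  have := (lA_bound hk hw).1
  omega

lemma xB_ne (n : ℕ) : ∀ i, i < bn n → ∀ k, k ≤ bn n → ∀ w, w < 2 ^ k → xB n i ≠ fB n k w := by
  intro i hi k hk w hw h
  have hv := congrArg Fin.val h
  have hab := ab_add n
  rw [xB_val hi, fB, mfin_val (lB_lt hk hw)] at hv
  have := (lB_bound hk hw).1
  have : (0:ℕ) < 2 ^ (an n + 1) := Nat.pow_pos (by norm_num)
  omega

/-! ### The circuit -/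

def circA (n : ℕ) : Circuit (Nn n) := build (xA n) (fA n) (an n)
def circB (n : ℕ) : Circuit (Nn n) := build (xB n) (fB n) (bn n)
def phC (n : ℕ) : Circuit (Nn n) :=
  (List.range (2 ^ n)).map fun j =>
    mkTof (fA n (an n) (j % 2 ^ an n)) (fB n (bn n) (j / 2 ^ an n)) (fC n j)
def circ (n : ℕ) : Circuit (Nn n) := circA n ++ circB n ++ phC n

lemma circ_length (n : ℕ) :
    (circ n).length = (3 * 2 ^ an n - 2) + (3 * 2 ^ bn n - 2) + 2 ^ n := by
  simp [circ, circA, circB, phC, build_length]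
  omega

lemma pad_ge {n q : ℕ} (x : Fin n → Bool) (i : Fin (n + q)) (h : n ≤ (i : ℕ)) :
    pad x i = false := dif_neg (by omega)

lemma pad_mfin {n : ℕ} (x : Fin n → Bool) (m : ℕ) (hm : m < n) :
    pad (q := qn n) x (mfin n m) = x ⟨m, hm⟩ := by
  have hv : ((mfin n m) : ℕ) = m := mfin_val (by have := Nn_pos n; unfold Nn at *; omega)
  simp only [pad]
  rw [dif_pos (show ((mfin n m) : ℕ) < n by omega)]
  exact congrArg x (Fin.ext hv)

lemma fB_ne_fA {n k w k' w' : ℕ} (hk : k ≤ bn n) (hw : w < 2 ^ k)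
    (hk' : k' ≤ an n) (hw' : w' < 2 ^ k') : fB n k w ≠ fA n k' w' := by
  intro h
  have hv := congrArg Fin.val h
  rw [fB, fA, mfin_val (lB_lt hk hw), mfin_val (lA_lt hk' hw')] at hv
  have := (lB_bound hk hw).1
  have := (lA_bound hk' hw').2
  omega

lemma fC_ne_fA {n j k' w' : ℕ} (hj : j < 2 ^ n) (hk' : k' ≤ an n) (hw' : w' < 2 ^ k') :
    fC n j ≠ fA n k' w' := by
  intro h
  have hv := congrArg Fin.val h
  rw [fC, fA, mfin_val (lC_bound hj).2, mfin_val (lA_lt hk' hw')] at hv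
  have := (lC_bound hj).1
  have := (lA_bound hk' hw').2
  have : (0:ℕ) < 2 ^ (bn n + 1) := Nat.pow_pos (by norm_num)
  omega

lemma fC_ne_fB {n j k' w' : ℕ} (hj : j < 2 ^ n) (hk' : k' ≤ bn n) (hw' : w' < 2 ^ k') :
    fC n j ≠ fB n k' w' := by
  intro h
  have hv := congrArg Fin.val h
  rw [fC, fB, mfin_val (lC_bound hj).2, mfin_val (lB_lt hk' hw')] at hv
  have := (lC_bound hj).1
  have := (lB_bound hk' hw').2
  omega

lemma fC_ne_fC {n j j' : ℕ} (hj : j < 2 ^ n) (hj' : j' < 2 ^ n) (h : j ≠ j') :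
    fC n j ≠ fC n j' := by
  intro he
  have hv := congrArg Fin.val he
  rw [fC, fC, mfin_val (lC_bound hj).2, mfin_val (lC_bound hj').2] at hv
  unfold lC at hv
  omega

lemma xB_ne_fA {n i k w : ℕ} (hi : i < bn n) (hk : k ≤ an n) (hw : w < 2 ^ k) :
    xB n i ≠ fA n k w := by
  intro h
  have hab := ab_add n
  have hv := congrArg Fin.val h
  rw [xB_val hi, fA, mfin_val (lA_lt hk hw)] at hv
  have := (lA_bound hk hw).1
  omega

theorem circ_eval (n : ℕ) (x : Fin n → Bool) (j : ℕ) (hj : j < 2 ^ n) :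
    Circuit.eval (circ n) (pad x) (fC n j)
      = decide (∀ i : Fin n, x i = Nat.testBit j (i : ℕ)) := by
  have hab := ab_add n
  have hpa : (0:ℕ) < 2 ^ an n := Nat.pow_pos (by norm_num)
  have hpb : (0:ℕ) < 2 ^ bn n := Nat.pow_pos (by norm_num)
  have hmul : 2 ^ an n * 2 ^ bn n = 2 ^ n := by rw [← pow_add, hab]
  have hdivlt : ∀ u, u < 2 ^ n → u / 2 ^ an n < 2 ^ bn n := by
    intro u hu
    rw [Nat.div_lt_iff_lt_mul hpa]
    calc u < 2 ^ n := hu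
    _ = 2 ^ bn n * 2 ^ an n := by rw [mul_comm, hmul]
  -- stage A
  have hzA : ∀ k, k ≤ an n → ∀ w, w < 2 ^ k → pad x (fA n k w) = false := by
    intro k hk w hw
    exact pad_ge x _ (by rw [fA, mfin_val (lA_lt hk hw)]; exact (lA_bound hk hw).1)
  obtain ⟨A1, A2⟩ := build_spec (xA n) (fA n) (pad x) (an n) (fA_inj n) (xA_ne n) hzA
  set v1 := Circuit.eval (build (xA n) (fA n) (an n)) (pad x) with hv1
  -- stage B
  have hzB : ∀ k, k ≤ bn n → ∀ w, w < 2 ^ k → v1 (fB n k w) = false := by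
    intro k hk w hw
    rw [A2 _ (fun k' hk' w' hw' => fB_ne_fA hk hw hk' hw')]
    refine pad_ge x _ ?_
    rw [fB, mfin_val (lB_lt hk hw)]
    have h1 := (lB_bound hk hw).1
    have h2 : (0:ℕ) < 2 ^ (an n + 1) := Nat.pow_pos (by norm_num)
    omega
  obtain ⟨B1, B2⟩ := build_spec (xB n) (fB n) v1 (bn n) (fB_inj n) (xB_ne n) hzB
  set v2 := Circuit.eval (build (xB n) (fB n) (bn n)) v1 with hv2
  -- values after stage B
  have hA : ∀ u, u < 2 ^ an n → v2 (fA n (an n) u)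
      = decide (∀ i < an n, pad x (xA n i) = Nat.testBit u i) := by
    intro u hu
    rw [B2 _ (fun k hk w hw => (fB_ne_fA hk hw le_rfl hu).symm), A1 u hu]
  have hB : ∀ u, u < 2 ^ bn n → v2 (fB n (bn n) u)
      = decide (∀ i < bn n, pad x (xB n i) = Nat.testBit u i) := by
    intro u hu
    rw [B1 u hu, decide_eq_decide]
    refine forall₂_congr (fun i hi => ?_)
    rw [A2 _ (fun k hk w hw => xB_ne_fA hi hk hw)]
  have hCz : ∀ u, u < 2 ^ n → v2 (fC n u) = false := by
    intro u hu
    rw [B2 _ (fun k hk w hw => fC_ne_fB hu hk hw),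
      A2 _ (fun k hk w hw => fC_ne_fA hu hk hw)]
    refine pad_ge x _ ?_
    rw [fC, mfin_val (lC_bound hu).2]
    have h1 := (lC_bound hu).1
    have h2 : (0:ℕ) < 2 ^ (an n + 1) := Nat.pow_pos (by norm_num)
    have h3 : (0:ℕ) < 2 ^ (bn n + 1) := Nat.pow_pos (by norm_num)
    omega
  -- phase C
  have hT : (phC n).Pairwise fun g g' => g.t ≠ g'.t := by
    apply pairwise_range_map
    intro i j' hij hj'
    simpa using fC_ne_fC (by omega) hj' (by omega)
  have hC : ∀ g ∈ phC n, ∀ g' ∈ phC n, g.t ∉ g'.I := by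
    intro g hg g' hg'
    obtain ⟨u, hu, rfl⟩ := mem_range_map.1 hg
    obtain ⟨u', hu', rfl⟩ := mem_range_map.1 hg'
    rw [mkTof_t, mkTof_I (fC_ne_fA hu' le_rfl (Nat.mod_lt _ hpa))
      (fC_ne_fB hu' le_rfl (hdivlt u' hu'))]
    simp only [Finset.mem_insert, Finset.mem_singleton]
    push_neg
    exact ⟨fC_ne_fA hu le_rfl (Nat.mod_lt _ hpa), fC_ne_fB hu le_rfl (hdivlt u' hu')⟩
  have hgmem : mkTof (fA n (an n) (j % 2 ^ an n)) (fB n (bn n) (j / 2 ^ an n)) (fC n j)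
      ∈ phC n := mem_range_map.2 ⟨j, hj, rfl⟩
  have hev := eval_parallel (phC n) v2 hT hC _ hgmem
  rw [mkTof_t, mkTof_I (fC_ne_fA hj le_rfl (Nat.mod_lt _ hpa))
    (fC_ne_fB hj le_rfl (hdivlt j hj))] at hev
  have hcirc : Circuit.eval (circ n) (pad x) (fC n j) = Circuit.eval (phC n) v2 (fC n j) := by
    simp only [circ, circA, circB, eval_append, hv1, hv2]
  have hpair : Circuit.eval (phC n) v2 (fC n j)
      = (v2 (fA n (an n) (j % 2 ^ an n)) && v2 (fB n (bn n) (j / 2 ^ an n))) := by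
    rw [hev, hCz j hj]
    simp [Finset.forall_mem_insert]
  rw [hcirc, hpair, hA _ (Nat.mod_lt _ hpa), hB _ (hdivlt j hj)]
  -- combine
  have hdiv : ∀ i, Nat.testBit (j / 2 ^ an n) i = Nat.testBit j (an n + i) := by
    intro i
    rw [← Nat.shiftRight_eq_div_pow, Nat.testBit_shiftRight]
  have hpadA : ∀ i (hi : i < n), pad x (xA n i) = x ⟨i, hi⟩ := fun i hi => pad_mfin x i hi
  have hpadB : ∀ i (hi : an n + i < n), pad x (xB n i) = x ⟨an n + i, hi⟩ :=
    fun i hi => pad_mfin x _ hi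
  rw [Bool.eq_iff_iff]
  simp only [Bool.and_eq_true, decide_eq_true_eq]
  constructor
  · rintro ⟨h1, h2⟩ i
    by_cases hi : (i : ℕ) < an n
    · have h := h1 (i : ℕ) hi
      rw [hpadA _ i.isLt, Nat.testBit_mod_two_pow] at h
      simpa [hi] using h
    · have hb' : (i : ℕ) - an n < bn n := by omega
      have h := h2 _ hb'
      rw [hpadB _ (by omega), hdiv] at h
      have he : an n + ((i : ℕ) - an n) = (i : ℕ) := by omega
      simpa [he] using h
  · intro h
    constructor
    · intro i hi
      rw [hpadA i (by omega), Nat.testBit_mod_two_pow]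
      simpa [hi] using h ⟨i, by omega⟩
    · intro i hi
      rw [hpadB i (by omega), hdiv]
      exact h ⟨an n + i, by omega⟩

lemma asymp_aux (f : ℕ → ℕ) (C : ℕ) (h1 : ∀ n, 2 ^ n ≤ f n)
    (h2 : ∀ n, f n ≤ 2 ^ n + C * 2 ^ (n - n / 2)) :
    AsympEquiv (fun n => (f n : ℝ)) (fun n => (2 : ℝ) ^ n) := by
  have t1 : Tendsto (fun k : ℕ => ((1:ℝ)/2) ^ k) atTop (nhds 0) :=
    tendsto_pow_atTop_nhds_zero_of_lt_one (by norm_num) (by norm_num)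
  have t2 : Tendsto (fun n : ℕ => n / 2) atTop atTop :=
    tendsto_atTop_atTop.2 fun b => ⟨2 * b, fun n hn => by omega⟩
  have t3 := t1.comp t2
  have t4 : Tendsto (fun n : ℕ => 1 + (C:ℝ) * ((1/2) ^ (n/2))) atTop (nhds (1 + (C:ℝ) * 0)) :=
    tendsto_const_nhds.add (t3.const_mul _)
  rw [mul_zero, add_zero] at t4
  apply tendsto_of_tendsto_of_tendsto_of_le_of_le (tendsto_const_nhds (x := (1:ℝ))) t4
  · intro n
    rw [le_div_iff₀ (by positivity : (0:ℝ) < 2 ^ n), one_mul]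
    show (2:ℝ) ^ n ≤ (f n : ℝ)
    exact_mod_cast h1 n
  · intro n
    show (f n : ℝ) / 2 ^ n ≤ _
    rw [div_le_iff₀ (by positivity : (0:ℝ) < 2 ^ n)]
    have key : ((1:ℝ)/2) ^ (n/2) * 2 ^ n = 2 ^ (n - n/2) := by
      rw [one_div, inv_pow, inv_mul_eq_div, div_eq_iff (by positivity : ((2:ℝ)^(n/2)) ≠ 0),
        ← pow_add]
      congr 1
      omega
    have hc := h2 n
    have hcast : (f n : ℝ) ≤ 2 ^ n + (C:ℝ) * 2 ^ (n - n/2) := by exact_mod_cast hc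
    calc (f n : ℝ) ≤ 2 ^ n + (C:ℝ) * 2 ^ (n - n/2) := hcast
    _ = (1 + (C:ℝ) * ((1/2) ^ (n/2))) * 2 ^ n := by rw [add_mul, one_mul, mul_assoc, key]

/-- All `2ⁿ` conjunctions of `n` variables can be implemented by reversible circuits
`S_n` with `q n` additional inputs, where `L(S_n) ~ 2ⁿ` and `q n ~ 2ⁿ`. -/
theorem conjunctions_complexity :
    ∃ (q : ℕ → ℕ) (S : ∀ n, Circuit (n + q n)),
      (∀ n, Implements (S n) (conjAll n)) ∧
      AsympEquiv (fun n => ((S n).L : ℝ)) (fun n => (2 : ℝ) ^ n) ∧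
      AsympEquiv (fun n => (q n : ℝ)) (fun n => (2 : ℝ) ^ n) := by
  classical
  refine ⟨qn, fun n => circ n, ?_, ?_, ?_⟩
  · intro n
    constructor
    · have h1 : (0:ℕ) < 2 ^ (an n + 1) := Nat.pow_pos (by norm_num)
      have h2 : (0:ℕ) < 2 ^ (bn n + 1) := Nat.pow_pos (by norm_num)
      show 2 ^ n ≤ n + qn n
      unfold qn
      omega
    · haveI : NeZero (n + qn n) := ⟨(Nn_pos n).ne'⟩
      refine ⟨Equiv.addLeft (mfin n (lC n 0)), ?_⟩
      intro x j hj
      have h0 : (0:ℕ) < 2 ^ n := Nat.pow_pos (by norm_num)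
      have hoff : lC n 0 < Nn n := (lC_bound h0).2
      have hjlt : lC n (j : ℕ) < Nn n := (lC_bound j.isLt).2
      have hπ : (Equiv.addLeft (mfin n (lC n 0))) ⟨(j : ℕ), hj⟩ = fC n (j : ℕ) := by
        apply Fin.ext
        show ((mfin n (lC n 0)) + (⟨(j : ℕ), hj⟩ : Fin (n + qn n))).val = _
        rw [Fin.add_def]
        show ((mfin n (lC n 0)).val + (j : ℕ)) % Nn n = (fC n (j : ℕ)).val
        rw [mfin_val hoff, fC, mfin_val hjlt]
        have he : lC n 0 + (j : ℕ) = lC n (j : ℕ) := by unfold lC; omega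
        rw [he, Nat.mod_eq_of_lt hjlt]
      rw [hπ, circ_eval n x (j : ℕ) j.isLt]
      rfl
  · apply asymp_aux (fun n => (circ n).L) 6
    · intro n
      have h1 : (0:ℕ) < 2 ^ an n := Nat.pow_pos (by norm_num)
      have h2 : (0:ℕ) < 2 ^ bn n := Nat.pow_pos (by norm_num)
      show 2 ^ n ≤ (circ n).length
      rw [circ_length]
      omega
    · intro n
      have h1 : (0:ℕ) < 2 ^ an n := Nat.pow_pos (by norm_num)
      have h3 : (2:ℕ) ^ an n ≤ 2 ^ (n - n / 2) :=
        Nat.pow_le_pow_right (by norm_num) (by unfold an; omega)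
      have h4 : (2:ℕ) ^ bn n = 2 ^ (n - n / 2) := rfl
      show (circ n).length ≤ _
      rw [circ_length]
      omega
  · apply asymp_aux qn 6
    · intro n
      have h1 : (0:ℕ) < 2 ^ (an n + 1) := Nat.pow_pos (by norm_num)
      have h2 : (0:ℕ) < 2 ^ (bn n + 1) := Nat.pow_pos (by norm_num)
      show 2 ^ n ≤ qn n
      unfold qn
      omega
    · intro n
      have h3 : (2:ℕ) ^ (an n + 1) ≤ 2 * 2 ^ (n - n / 2) := by
        rw [pow_succ, mul_comm]
        exact Nat.mul_le_mul_left _ (Nat.pow_le_pow_right (by norm_num) (by unfold an; omega))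
      have h4 : (2:ℕ) ^ (bn n + 1) = 2 * 2 ^ (n - n / 2) := by
        rw [pow_succ, mul_comm]; rfl
      show qn n ≤ _
      unfold qn
      omega

end Rev
end

section
/- For every n > 3, a transformation f: 𝔹^n → 𝔹^n is defined by some reversible circuit with exactly n inputs over NOT, CNOT and C²NOT gates (no additional inputs) if and only if f is an even permutation of the set 𝔹^n; that is, F(n,0) is exactly the set of permutations in the alternating group A(𝔹^n). -/
open Filter

namespace RevAux

open Equiv Equiv.Perm Finset

variable {n : ℕ}

abbrev V (n : ℕ) := Fin n → Bool

def z : V n := fun _ => false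
def δ (t : Fin n) : V n := fun i => decide (i = t)
def vx (x y : V n) : V n := fun i => xor (x i) (y i)

@[simp] lemma vx_apply (x y : V n) (i : Fin n) : vx x y i = xor (x i) (y i) := rfl
@[simp] lemma z_apply (i : Fin n) : (z : V n) i = false := rfl
@[simp] lemma δ_apply (t i : Fin n) : δ t i = decide (i = t) := rfl

lemma δ_self (t : Fin n) : δ t t = true := by simp
lemma δ_ne {t i : Fin n} (h : i ≠ t) : δ t i = false := by simp [h]

lemma vx_comm (x y : V n) : vx x y = vx y x := funext fun i => Bool.xor_comm _ _
lemma vx_assoc (x y w : V n) : vx (vx x y) w = vx x (vx y w) :=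
  funext fun i => Bool.xor_assoc _ _ _
@[simp] lemma vx_self (x : V n) : vx x x = z := funext fun i => Bool.xor_self _
@[simp] lemma vx_z (x : V n) : vx x z = x := funext fun i => Bool.xor_false _
@[simp] lemma z_vx (x : V n) : vx z x = x := funext fun i => Bool.false_xor _
@[simp] lemma vx_cancel (x y : V n) : vx (vx x y) y = x := by
  rw [vx_assoc, vx_self, vx_z]
lemma vx_cancel_left (x y : V n) : vx x (vx x y) = y := by
  rw [← vx_assoc, vx_self, z_vx]

lemma vx_right_comm (x a b : V n) : vx (vx x a) b = vx (vx x b) a := by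
  rw [vx_assoc, vx_assoc, vx_comm a b]

lemma ne_of_coord {x y : V n} (i : Fin n) (h : x i ≠ y i) : x ≠ y :=
  fun e => h (by rw [e])

lemma vx_ne {x d : V n} (i : Fin n) (hi : d i = true) : vx x d ≠ x := by
  apply ne_of_coord i
  simp [hi]

def ctrl (C : Finset (Fin n)) (x : V n) : Bool := decide (∀ i ∈ C, x i = true)

lemma ctrl_eq_of_agree {C : Finset (Fin n)} {x y : V n} (h : ∀ i ∈ C, x i = y i) :
    ctrl C x = ctrl C y := by
  unfold ctrl
  rw [decide_eq_decide]
  exact ⟨fun H i hi => (h i hi) ▸ H i hi, fun H i hi => (h i hi).symm ▸ H i hi⟩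

@[simp] lemma ctrl_empty (x : V n) : ctrl ∅ x = true := by simp [ctrl]

lemma ctrl_insert (a : Fin n) (C : Finset (Fin n)) (x : V n) :
    ctrl (insert a C) x = (x a && ctrl C x) := by
  unfold ctrl
  simp [Finset.forall_mem_insert, Bool.decide_and]

lemma ctrl_singleton (i : Fin n) (x : V n) : ctrl {i} x = x i := by
  unfold ctrl; simp

def mca (C : Finset (Fin n)) (t : Fin n) (x : V n) : V n :=
  fun j => if j = t then xor (x t) (ctrl C x) else x j

lemma mca_ne {C : Finset (Fin n)} {t j : Fin n} (h : j ≠ t) (x : V n) :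
    mca C t x j = x j := if_neg h

lemma mca_t (C : Finset (Fin n)) (t : Fin n) (x : V n) :
    mca C t x t = xor (x t) (ctrl C x) := if_pos rfl

lemma ctrl_mca {C : Finset (Fin n)} {t' : Fin n} (C' : Finset (Fin n)) (hT : t' ∉ C)
    (x : V n) : ctrl C (mca C' t' x) = ctrl C x :=
  ctrl_eq_of_agree fun i hi => mca_ne (fun e : i = t' => hT (e ▸ hi)) x

lemma mca_eq (C : Finset (Fin n)) (t : Fin n) (x : V n) :
    mca C t x = cond (ctrl C x) (vx x (δ t)) x := by
  funext j
  by_cases hj : j = t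
  · subst hj; cases h : ctrl C x <;> simp [mca, h]
  · cases h : ctrl C x <;> simp [mca, hj, δ_ne hj]

lemma mca_mca {C : Finset (Fin n)} {t : Fin n} (h : t ∉ C) (x : V n) :
    mca C t (mca C t x) = x := by
  funext j
  by_cases hj : j = t
  · subst hj
    rw [mca_t, mca_t, ctrl_mca C h x, Bool.xor_assoc, Bool.xor_self, Bool.xor_false]
  · rw [mca_ne hj, mca_ne hj]

def mcx (C : Finset (Fin n)) (t : Fin n) (h : t ∉ C) : Perm (V n) :=
  ⟨mca C t, mca C t, mca_mca h, mca_mca h⟩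

@[simp] lemma mcx_apply {C : Finset (Fin n)} {t : Fin n} (h : t ∉ C) (x : V n) :
    mcx C t h x = mca C t x := rfl

lemma mcx_inv {C : Finset (Fin n)} {t : Fin n} (h : t ∉ C) :
    (mcx C t h)⁻¹ = mcx C t h := rfl

def tr (c : V n) : Perm (V n) :=
  ⟨fun x => vx x c, fun x => vx x c, fun x => vx_cancel x c, fun x => vx_cancel x c⟩

@[simp] lemma tr_apply (c x : V n) : tr c x = vx x c := rfl

lemma tr_inv (c : V n) : (tr c)⁻¹ = tr c := rfl

def GSet (n : ℕ) : Set (Perm (V n)) :=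
  {σ | ∃ (C : Finset (Fin n)) (t : Fin n) (h : t ∉ C), C.card ≤ 2 ∧ σ = mcx C t h}

def G (n : ℕ) : Subgroup (Perm (V n)) := Subgroup.closure (GSet n)

lemma gen_mem (C : Finset (Fin n)) (t : Fin n) (h : t ∉ C) (hc : C.card ≤ 2) :
    mcx C t h ∈ G n :=
  Subgroup.subset_closure ⟨C, t, h, hc, rfl⟩

lemma exists_not_mem {s : Finset (Fin n)} (h : s.card < n) : ∃ m, m ∉ s := by
  by_contra hc
  push_neg at hc
  have he : s = univ := Finset.eq_univ_iff_forall.2 hc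
  rw [he, Finset.card_univ, Fintype.card_fin] at h
  omega

lemma bool_aux1 : ∀ a b c : Bool, xor (xor a (!b && c)) (b && c) = xor a c := by decide

lemma sign_key {C : Finset (Fin n)} {t m : Fin n} (h : t ∉ C) (hmt : m ≠ t) (hmC : m ∉ C)
    (htC' : t ∉ insert m C) :
    mcx C t h = mcx (insert m C) t htC' * tr (δ m) * mcx (insert m C) t htC' * tr (δ m) := by
  apply Equiv.ext; intro x
  simp only [Perm.mul_apply, mcx_apply, tr_apply]
  set x1 := vx x (δ m) with hx1
  set x2 := mca (insert m C) t x1 with hx2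
  set x3 := vx x2 (δ m) with hx3
  have e1 : ∀ i, i ≠ m → x1 i = x i := fun i hi => by simp [hx1, hi]
  have e2 : ∀ i, i ≠ t → x2 i = x1 i := fun i hi => by rw [hx2, mca_ne hi]
  have e3 : ∀ i, i ≠ m → x3 i = x2 i := fun i hi => by simp [hx3, hi]
  have hcC : ctrl C x1 = ctrl C x :=
    ctrl_eq_of_agree fun i hi => e1 i (fun e : i = m => hmC (e ▸ hi))
  have hcC3 : ctrl C x3 = ctrl C x := ctrl_eq_of_agree fun i hi => by
    rw [e3 i (fun e : i = m => hmC (e ▸ hi)), e2 i (fun e : i = t => h (e ▸ hi)),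
      e1 i (fun e : i = m => hmC (e ▸ hi))]
  have hx1m : x1 m = !(x m) := by simp [hx1]
  have hx2m : x2 m = !(x m) := by rw [e2 m hmt, hx1m]
  have hx3m : x3 m = x m := by rw [hx3]; simp [hx2m]
  have hx1t : x1 t = x t := e1 t (fun e => hmt e.symm)
  funext j
  by_cases hj : j = t
  · have hx3t : x3 t = xor (x t) (!(x m) && ctrl C x) := by
      rw [e3 t (fun e => hmt e.symm), hx2, mca_t, ctrl_insert, hx1m, hcC, hx1t]
    rw [hj, mca_t, mca_t, hx3t, ctrl_insert, hx3m, hcC3]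
    exact (bool_aux1 (x t) (x m) (ctrl C x)).symm
  · by_cases hjm : j = m
    · subst hjm
      rw [mca_ne hj, mca_ne hj, hx3m]
    · rw [mca_ne hj, mca_ne hj, e3 j hjm, e2 j hj, e1 j hjm]

lemma sign_gen (hn : 3 < n) {σ : Perm (V n)} (hσ : σ ∈ GSet n) : Equiv.Perm.sign σ = 1 := by
  obtain ⟨C, t, h, hc, rfl⟩ := hσ
  obtain ⟨m, hm⟩ : ∃ m, m ∉ insert t C :=
    exists_not_mem (lt_of_le_of_lt (Finset.card_insert_le _ _) (by omega))
  have hmt : m ≠ t := fun e => hm (by simp [e])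
  have hmC : m ∉ C := fun e => hm (Finset.mem_insert_of_mem e)
  have htC' : t ∉ insert m C := by
    simp only [Finset.mem_insert, not_or]; exact ⟨fun e => hmt e.symm, h⟩
  rw [sign_key h hmt hmC htC', map_mul, map_mul, map_mul]
  have key : ∀ u v : ℤˣ, u * v * u * v = 1 := by
    intro u v
    rcases Int.units_eq_one_or u with rfl | rfl <;>
      rcases Int.units_eq_one_or v with rfl | rfl <;> decide
  exact key _ _

lemma bool_aux2 : ∀ u a b p : Bool, xor (xor u (a && xor b p)) (a && b) = xor u (a && p) := by
  decide

lemma ctrl_pair (a m : Fin n) (x : V n) : ctrl {a, m} x = (x a && x m) := by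
  rw [show ({a, m} : Finset (Fin n)) = insert a {m} from rfl, ctrl_insert, ctrl_singleton]

lemma mcx_key {C : Finset (Fin n)} {t a m : Fin n} (h : t ∉ C) (ha : a ∈ C)
    (hmt : m ≠ t) (hmC : m ∉ C) (hmC' : m ∉ C.erase a)
    (htam : t ∉ ({a, m} : Finset (Fin n))) :
    mcx C t h = mcx {a, m} t htam * mcx (C.erase a) m hmC' * mcx {a, m} t htam *
      mcx (C.erase a) m hmC' := by
  have hat : a ≠ t := fun e => h (e ▸ ha)
  have ham : a ≠ m := fun e => hmC (e ▸ ha)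
  apply Equiv.ext; intro x
  simp only [Perm.mul_apply, mcx_apply]
  set x1 := mca (C.erase a) m x with hx1
  set x2 := mca {a, m} t x1 with hx2
  set x3 := mca (C.erase a) m x2 with hx3
  have e1 : ∀ i, i ≠ m → x1 i = x i := fun i hi => by rw [hx1, mca_ne hi]
  have e2 : ∀ i, i ≠ t → x2 i = x1 i := fun i hi => by rw [hx2, mca_ne hi]
  have e3 : ∀ i, i ≠ m → x3 i = x2 i := fun i hi => by rw [hx3, mca_ne hi]
  have hagree : ∀ i ∈ C.erase a, x2 i = x i := fun i hi => by
    have him : i ≠ m := fun e : i = m => hmC' (e ▸ hi)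
    have hit : i ≠ t := fun e : i = t => h (e ▸ Finset.mem_of_mem_erase hi)
    rw [e2 i hit, e1 i him]
  have hp2 : ctrl (C.erase a) x2 = ctrl (C.erase a) x := ctrl_eq_of_agree hagree
  have hx1m : x1 m = xor (x m) (ctrl (C.erase a) x) := by rw [hx1, mca_t]
  have hx2m : x2 m = xor (x m) (ctrl (C.erase a) x) := by rw [e2 m hmt, hx1m]
  have hx3m : x3 m = x m := by
    rw [hx3, mca_t, hp2, hx2m, Bool.xor_assoc, Bool.xor_self, Bool.xor_false]
  have hx1a : x1 a = x a := e1 a ham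
  have hx3a : x3 a = x a := by rw [e3 a ham, e2 a hat, hx1a]
  have hx1t : x1 t = x t := e1 t (fun e => hmt e.symm)
  have hccx : ctrl C x = (x a && ctrl (C.erase a) x) := by
    conv_lhs => rw [← Finset.insert_erase ha]
    rw [ctrl_insert]
  funext j
  by_cases hj : j = t
  · have hx3t : x3 t = xor (x t) (x a && xor (x m) (ctrl (C.erase a) x)) := by
      rw [e3 t (fun e => hmt e.symm), hx2, mca_t, ctrl_pair, hx1a, hx1m, hx1t]
    rw [hj, mca_t, mca_t, ctrl_pair, hx3t, hx3a, hx3m, hccx]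
    exact (bool_aux2 (x t) (x a) (x m) (ctrl (C.erase a) x)).symm
  · by_cases hjm : j = m
    · rw [hjm, mca_ne hmt, mca_ne hmt, hx3m]
    · rw [mca_ne hj, mca_ne hj, e3 j hjm, e2 j hj, e1 j hjm]

lemma mcx_mem : ∀ (k : ℕ) (C : Finset (Fin n)) (t : Fin n) (h : t ∉ C),
    C.card ≤ k → C.card + 2 ≤ n → mcx C t h ∈ G n := by
  intro k
  induction k with
  | zero => intro C t h hk _; exact gen_mem _ _ _ (by omega)
  | succ k ih =>
    intro C t h hk hn2
    by_cases hc : C.card ≤ 2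
    · exact gen_mem _ _ _ hc
    · obtain ⟨a, ha⟩ : C.Nonempty := Finset.card_pos.1 (by omega)
      obtain ⟨m, hm⟩ : ∃ m, m ∉ insert t C :=
        exists_not_mem (lt_of_le_of_lt (Finset.card_insert_le _ _) (by omega))
      have hmt : m ≠ t := fun e => hm (by simp [e])
      have hmC : m ∉ C := fun e => hm (Finset.mem_insert_of_mem e)
      have hat : a ≠ t := fun e => h (e ▸ ha)
      have hmC' : m ∉ C.erase a := fun e => hmC (Finset.mem_of_mem_erase e)
      have htam : t ∉ ({a, m} : Finset (Fin n)) := by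
        simp only [Finset.mem_insert, Finset.mem_singleton, not_or]
        exact ⟨fun e => hat e.symm, fun e => hmt e.symm⟩
      rw [mcx_key h ha hmt hmC hmC' htam]
      have hA : mcx (C.erase a) m hmC' ∈ G n :=
        ih _ _ _ (by rw [Finset.card_erase_of_mem ha]; omega)
          (by rw [Finset.card_erase_of_mem ha]; omega)
      have hB : mcx {a, m} t htam ∈ G n :=
        gen_mem _ _ _ (le_trans (Finset.card_insert_le _ _) (by simp))
      exact mul_mem (mul_mem (mul_mem hB hA) hB) hA

def supp (v : V n) : Finset (Fin n) := Finset.univ.filter (fun i => v i = true)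

lemma mem_supp {v : V n} {i : Fin n} : i ∈ supp v ↔ v i = true := by simp [supp]

lemma eq_z_of_supp {v : V n} (h : supp v = ∅) : v = z := by
  funext i
  have hi : i ∉ supp v := by simp [h]
  rw [mem_supp] at hi
  show v i = false
  exact Bool.eq_false_iff.2 hi

lemma supp_vx_δ {c : V n} {i : Fin n} (hi : c i = true) :
    supp (vx c (δ i)) = (supp c).erase i := by
  ext j
  by_cases hj : j = i
  · subst hj; simp [mem_supp, hi]
  · simp [mem_supp, hj]

lemma tr_z : tr (z : V n) = 1 := by
  apply Equiv.ext; intro x; simp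

lemma mcx_empty_apply (t : Fin n) (y : V n) :
    mcx ∅ t (Finset.notMem_empty t) y = vx y (δ t) := by simp [mca_eq]

lemma mca_singleton (i j : Fin n) (x : V n) : mca {i} j x = cond (x i) (vx x (δ j)) x := by
  rw [mca_eq, ctrl_singleton]

lemma mcx_single_fix {i j : Fin n} (hba : j ∉ ({i} : Finset (Fin n))) {y : V n}
    (hy : y i = false) : mcx {i} j hba y = y := by simp [mca_singleton, hy]

lemma mcx_single_apply {i j : Fin n} (hba : j ∉ ({i} : Finset (Fin n))) {y : V n}
    (hy : y i = true) : mcx {i} j hba y = vx y (δ j) := by simp [mca_singleton, hy]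

lemma tr_mem (c : V n) : tr c ∈ G n := by
  suffices H : ∀ (k : ℕ) (c : V n), (supp c).card ≤ k → tr c ∈ G n from H _ c le_rfl
  intro k
  induction k with
  | zero =>
    intro c hc
    have hce : supp c = ∅ := Finset.card_eq_zero.1 (le_antisymm hc (Nat.zero_le _))
    rw [eq_z_of_supp hce, tr_z]; exact one_mem _
  | succ k ih =>
    intro c hc
    rcases (supp c).eq_empty_or_nonempty with he | ⟨i, hi⟩
    · rw [eq_z_of_supp he, tr_z]; exact one_mem _
    · have hci : c i = true := mem_supp.1 hi
      have key : tr c = mcx ∅ i (Finset.notMem_empty i) * tr (vx c (δ i)) := by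
        apply Equiv.ext; intro x
        rw [Perm.mul_apply, tr_apply, tr_apply, mcx_empty_apply, vx_assoc, vx_cancel]
      rw [key]
      refine mul_mem (gen_mem _ _ _ (by simp)) (ih _ ?_)
      rw [supp_vx_δ hci, Finset.card_erase_of_mem hi]
      have := Finset.card_pos.2 ⟨i, hi⟩
      omega

lemma elimA {k m : Fin n} (hkm : k ≠ m) :
    ∀ (N : ℕ) (v : V n), ((supp v).erase m).card ≤ N → (∃ j, j ≠ m ∧ v j = true) →
    ∃ g ∈ G n, g z = z ∧ g (δ m) = δ m ∧ (g v = δ k ∨ g v = vx (δ k) (δ m)) := by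
  intro N
  induction N with
  | zero =>
    rintro v hcard ⟨j, hjm, hj⟩
    exfalso
    have hmem : j ∈ (supp v).erase m := Finset.mem_erase.2 ⟨hjm, mem_supp.2 hj⟩
    have := Finset.card_pos.2 ⟨j, hmem⟩
    omega
  | succ N ih =>
    intro v hcard hex
    by_cases h2 : 2 ≤ ((supp v).erase m).card
    · obtain ⟨a, ha, b, hb, hab⟩ := Finset.one_lt_card.1 h2
      rw [Finset.mem_erase] at ha hb
      have hva : v a = true := mem_supp.1 ha.2
      have hvb : v b = true := mem_supp.1 hb.2
      have hba : b ∉ ({a} : Finset (Fin n)) := by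
        simp only [Finset.mem_singleton]; exact fun e => hab e.symm
      have hcard' : ((supp (vx v (δ b))).erase m).card ≤ N := by
        rw [supp_vx_δ hvb, Finset.erase_right_comm,
          Finset.card_erase_of_mem (Finset.mem_erase.2 hb)]
        omega
      have hex' : ∃ j, j ≠ m ∧ (vx v (δ b)) j = true :=
        ⟨a, ha.1, by simp [hva, hab]⟩
      obtain ⟨g', hg', hgz, hgm, hgv⟩ := ih (vx v (δ b)) hcard' hex'
      refine ⟨g' * mcx {a} b hba, mul_mem hg' (gen_mem _ _ _ (by simp)), ?_, ?_, ?_⟩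
      · rw [Perm.mul_apply, mcx_single_fix hba rfl]; exact hgz
      · rw [Perm.mul_apply, mcx_single_fix hba (δ_ne ha.1)]; exact hgm
      · rw [Perm.mul_apply, mcx_single_apply hba hva]; exact hgv
    · have h1 : ((supp v).erase m).card = 1 := by
        obtain ⟨j, hjm, hj⟩ := hex
        have hmem : j ∈ (supp v).erase m := Finset.mem_erase.2 ⟨hjm, mem_supp.2 hj⟩
        have := Finset.card_pos.2 ⟨j, hmem⟩
        omega
      obtain ⟨j₀, hj0⟩ := Finset.card_eq_one.1 h1
      have hj0mem : j₀ ∈ (supp v).erase m := by rw [hj0]; exact Finset.mem_singleton_self j₀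
      rw [Finset.mem_erase] at hj0mem
      have hj0m : j₀ ≠ m := hj0mem.1
      have hvj0 : v j₀ = true := mem_supp.1 hj0mem.2
      have hother : ∀ i, i ≠ j₀ → i ≠ m → v i = false := by
        intro i hij him
        rcases Bool.eq_false_or_eq_true (v i) with hb | hb
        · exfalso
          have hmm : i ∈ (supp v).erase m := Finset.mem_erase.2 ⟨him, mem_supp.2 hb⟩
          rw [hj0, Finset.mem_singleton] at hmm
          exact hij hmm
        · exact hb
      have hδjm : δ j₀ m = false := δ_ne (fun e : m = j₀ => hj0m e.symm)
      have hδmj : δ m j₀ = false := δ_ne hj0m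
      have hv : v = δ j₀ ∨ v = vx (δ j₀) (δ m) := by
        rcases Bool.eq_false_or_eq_true (v m) with hm1 | hm0
        · right
          funext i
          by_cases hi : i = j₀
          · rw [hi, hvj0]
            show true = xor (δ j₀ j₀) (δ m j₀)
            rw [δ_self, hδmj]; rfl
          · by_cases him : i = m
            · rw [him, hm1]
              show true = xor (δ j₀ m) (δ m m)
              rw [δ_self, hδjm]; rfl
            · rw [hother i hi him]
              show false = xor (δ j₀ i) (δ m i)
              rw [δ_ne hi, δ_ne him]; rfl
        · left
          funext i
          by_cases hi : i = j₀
          · rw [hi, hvj0, δ_self]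
          · by_cases him : i = m
            · rw [him, hm0, δ_ne (fun e : m = j₀ => hj0m e.symm)]
            · rw [hother i hi him, δ_ne hi]
      by_cases hjk : j₀ = k
      · subst hjk
        exact ⟨1, one_mem _, rfl, rfl, hv⟩
      · have hkj : k ∉ ({j₀} : Finset (Fin n)) := by
          simp only [Finset.mem_singleton]; exact fun e => hjk e.symm
        have hj0k : j₀ ∉ ({k} : Finset (Fin n)) := by
          simp only [Finset.mem_singleton]; exact hjk
        have hvk : v k = false := hother k (fun e : k = j₀ => hjk e.symm) hkm
        have hwk : (vx v (δ k)) k = true := by simp [hvk]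
        refine ⟨mcx {k} j₀ hj0k * mcx {j₀} k hkj,
          mul_mem (gen_mem _ _ _ (by simp)) (gen_mem _ _ _ (by simp)), ?_, ?_, ?_⟩
        · rw [Perm.mul_apply, mcx_single_fix hkj rfl, mcx_single_fix hj0k rfl]
        · rw [Perm.mul_apply, mcx_single_fix hkj (δ_ne hj0m),
            mcx_single_fix hj0k (δ_ne hkm)]
        · rw [Perm.mul_apply, mcx_single_apply hkj hvj0, mcx_single_apply hj0k hwk]
          rcases hv with rfl | rfl
          · left
            rw [vx_right_comm, vx_self, z_vx]
          · right
            rw [vx_right_comm, show vx (vx (δ j₀) (δ m)) (δ j₀) = δ m from by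
              rw [vx_right_comm, vx_self, z_vx], vx_comm]

lemma vx_inj {u x y : V n} (h : vx x u = vx y u) : x = y := by
  have h2 := congrArg (fun q => vx q u) h
  simpa using h2

lemma vx_eq_z {x y : V n} (h : vx x y = z) : x = y := by
  funext i
  have h2 := congrFun h i
  simp only [vx_apply, z_apply] at h2
  rcases Bool.eq_false_or_eq_true (x i) with hx | hx <;>
    rcases Bool.eq_false_or_eq_true (y i) with hy | hy <;>
      rw [hx, hy] <;> rw [hx, hy] at h2 <;> simp_all

lemma exists_true_of_ne_z {v : V n} (h : v ≠ z) : ∃ j, v j = true := by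
  by_contra hc
  push_neg at hc
  exact h (funext fun i => Bool.eq_false_iff.2 (hc i))

lemma lin1 (hn : 3 < n) (k1 : Fin n) {u : V n} (hu : u ≠ z) :
    ∃ g ∈ G n, g z = z ∧ g u = δ k1 := by
  obtain ⟨j₀, hj₀⟩ := exists_true_of_ne_z hu
  obtain ⟨m, hm⟩ : ∃ m, m ∉ ({k1, j₀} : Finset (Fin n)) :=
    exists_not_mem (lt_of_le_of_lt (Finset.card_insert_le _ _)
      (by rw [Finset.card_singleton]; omega))
  have hmk : m ≠ k1 := fun e => hm (by rw [e]; exact Finset.mem_insert_self _ _)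
  have hmj : m ≠ j₀ := fun e => hm (by rw [e]; simp)
  obtain ⟨g, hg, hgz, hgm, hgu⟩ :=
    elimA (fun e : k1 = m => hmk e.symm) _ u le_rfl ⟨j₀, fun e => hmj e.symm, hj₀⟩
  rcases hgu with hgu | hgu
  · exact ⟨g, hg, hgz, hgu⟩
  · have hkm' : m ∉ ({k1} : Finset (Fin n)) := by
      simp only [Finset.mem_singleton]; exact hmk
    refine ⟨mcx {k1} m hkm' * g, mul_mem (gen_mem _ _ _ (by simp)) hg, ?_, ?_⟩
    · rw [Perm.mul_apply, hgz, mcx_single_fix hkm' rfl]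
    · rw [Perm.mul_apply, hgu, mcx_single_apply hkm'
        (by simp [Ne.symm hmk]), vx_cancel]

lemma canon (hn : 3 < n) {u v w : V n} (huv : u ≠ v) (huw : u ≠ w) (hvw : v ≠ w)
    (k1 k2 : Fin n) (hk : k1 ≠ k2) :
    ∃ g ∈ G n, g u = z ∧ g v = δ k1 ∧ g w = vx (δ k1) (δ k2) := by
  have hv1 : vx v u ≠ z := fun e => huv (vx_eq_z e).symm
  have hw1 : vx w u ≠ z := fun e => huw (vx_eq_z e).symm
  have hvw1 : vx v u ≠ vx w u := fun e => hvw (vx_inj e)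
  obtain ⟨g₂, hg₂, hg₂z, hg₂v⟩ := lin1 hn k1 hv1
  set w₂ := g₂ (vx w u) with hw₂
  have hw₂z : w₂ ≠ z := by
    rw [hw₂, ← hg₂z]; exact fun e => hw1 (g₂.injective e)
  have hw₂k : w₂ ≠ δ k1 := by
    rw [hw₂, ← hg₂v]; exact fun e => hvw1 (g₂.injective e).symm
  have hex : ∃ j, j ≠ k1 ∧ w₂ j = true := by
    by_contra hc
    push_neg at hc
    rcases Bool.eq_false_or_eq_true (w₂ k1) with h1 | h0
    · apply hw₂k
      funext i
      by_cases hi : i = k1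
      · rw [hi]; exact h1.trans (δ_self k1).symm
      · exact (Bool.eq_false_iff.2 (hc i hi)).trans (δ_ne hi).symm
    · apply hw₂z
      funext i
      show w₂ i = false
      by_cases hi : i = k1
      · rw [hi]; exact h0
      · exact Bool.eq_false_iff.2 (hc i hi)
  obtain ⟨g₃, hg₃, hg₃z, hg₃k, hg₃w⟩ := elimA (Ne.symm hk) _ w₂ le_rfl hex
  rcases hg₃w with h3 | h3
  · have hne : k1 ∉ ({k2} : Finset (Fin n)) := by
      simp only [Finset.mem_singleton]; exact hk
    refine ⟨mcx {k2} k1 hne * g₃ * g₂ * tr u,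
      mul_mem (mul_mem (mul_mem (gen_mem _ _ _ (by simp)) hg₃) hg₂) (tr_mem u),
      ?_, ?_, ?_⟩
    · simp only [Perm.mul_apply, tr_apply, vx_self]
      rw [hg₂z, hg₃z, mcx_single_fix hne rfl]
    · simp only [Perm.mul_apply, tr_apply]
      rw [hg₂v, hg₃k, mcx_single_fix hne (δ_ne (Ne.symm hk))]
    · simp only [Perm.mul_apply, tr_apply]
      rw [← hw₂, h3, mcx_single_apply hne (δ_self k2), vx_comm]
  · refine ⟨g₃ * g₂ * tr u, mul_mem (mul_mem hg₃ hg₂) (tr_mem u), ?_, ?_, ?_⟩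
    · simp only [Perm.mul_apply, tr_apply, vx_self]
      rw [hg₂z, hg₃z]
    · simp only [Perm.mul_apply, tr_apply]
      rw [hg₂v, hg₃k]
    · simp only [Perm.mul_apply, tr_apply]
      rw [← hw₂, h3, vx_comm]

def Sw (t : Fin n) (x : V n) : Perm (V n) := Equiv.swap x (vx x (δ t))

lemma Sw_def (t : Fin n) (x : V n) : Sw t x = Equiv.swap x (vx x (δ t)) := rfl

lemma Sw_shift (t : Fin n) (x : V n) : Sw t (vx x (δ t)) = Sw t x := by
  rw [Sw_def, Sw_def, vx_cancel, Equiv.swap_comm]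

lemma conj_Sw (c : V n) (t : Fin n) (x : V n) :
    tr c * Sw t x * (tr c)⁻¹ = Sw t (vx x c) := by
  rw [Sw_def, Sw_def, ← Equiv.swap_apply_apply, tr_apply, tr_apply, vx_right_comm]

lemma vx_swap_cancel (p d y : V n) : vx (vx p d) (vx p y) = vx y d := by
  funext i
  have hb : ∀ a b c : Bool, xor (xor a b) (xor a c) = xor c b := by decide
  exact hb _ _ _

def pvec (t m : Fin n) : V n := fun i => !(decide (i = t) || decide (i = m))

section Pcoords

variable {t m : Fin n}

lemma P0t : pvec t m t = false := by simp [pvec]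
lemma P0m : pvec t m m = false := by simp [pvec]
lemma P1t : vx (pvec t m) (δ t) t = true := by simp [pvec]
lemma P1m (htm : t ≠ m) : vx (pvec t m) (δ t) m = false := by simp [pvec, Ne.symm htm]
lemma P2t (htm : t ≠ m) : vx (pvec t m) (δ m) t = false := by simp [pvec, htm]
lemma P2m : vx (pvec t m) (δ m) m = true := by simp [pvec]
lemma P3t (htm : t ≠ m) : vx (vx (pvec t m) (δ m)) (δ t) t = true := by simp [pvec, htm]
lemma P3m (htm : t ≠ m) : vx (vx (pvec t m) (δ m)) (δ t) m = true := by
  simp [pvec, Ne.symm htm]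
lemma P0other {i : Fin n} (hit : i ≠ t) (him : i ≠ m) : pvec t m i = true := by
  simp [pvec, hit, him]
lemma P1other {i : Fin n} (hit : i ≠ t) (him : i ≠ m) : vx (pvec t m) (δ t) i = true := by
  simp [pvec, hit, him]
lemma P2other {i : Fin n} (hit : i ≠ t) (him : i ≠ m) : vx (pvec t m) (δ m) i = true := by
  simp [pvec, hit, him]
lemma P3other {i : Fin n} (hit : i ≠ t) (him : i ≠ m) :
    vx (vx (pvec t m) (δ m)) (δ t) i = true := by simp [pvec, hit, him]

lemma ctrl_univ_eq_true (htm : t ≠ m) {x : V n}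
    (hc : ctrl (Finset.univ \ ({t, m} : Finset (Fin n))) x = true) :
    x = pvec t m ∨ x = vx (pvec t m) (δ t) ∨ x = vx (pvec t m) (δ m) ∨
      x = vx (vx (pvec t m) (δ m)) (δ t) := by
  have hall : ∀ i, i ≠ t → i ≠ m → x i = true := by
    intro i hit him
    have hd := of_decide_eq_true hc
    exact hd i (by simp [hit, him])
  rcases Bool.eq_false_or_eq_true (x t) with hxt | hxt <;>
    rcases Bool.eq_false_or_eq_true (x m) with hxm | hxm
  · right; right; right
    funext i
    by_cases hit : i = t
    · rw [hit, hxt, P3t htm]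
    · by_cases him : i = m
      · rw [him, hxm, P3m htm]
      · rw [hall i hit him, P3other hit him]
  · right; left
    funext i
    by_cases hit : i = t
    · rw [hit, hxt, P1t]
    · by_cases him : i = m
      · rw [him, hxm, P1m htm]
      · rw [hall i hit him, P1other hit him]
  · right; right; left
    funext i
    by_cases hit : i = t
    · rw [hit, hxt, P2t htm]
    · by_cases him : i = m
      · rw [him, hxm, P2m]
      · rw [hall i hit him, P2other hit him]
  · left
    funext i
    by_cases hit : i = t
    · rw [hit, hxt, P0t]
    · by_cases him : i = m
      · rw [him, hxm, P0m]
      · rw [hall i hit him, P0other hit him]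

lemma ctrl_univ_of (htm : t ≠ m) {x : V n}
    (hx : x = pvec t m ∨ x = vx (pvec t m) (δ t) ∨ x = vx (pvec t m) (δ m) ∨
      x = vx (vx (pvec t m) (δ m)) (δ t)) :
    ctrl (Finset.univ \ ({t, m} : Finset (Fin n))) x = true := by
  unfold ctrl
  apply decide_eq_true
  intro i hi
  simp only [Finset.mem_sdiff, Finset.mem_univ, true_and, Finset.mem_insert,
    Finset.mem_singleton, not_or] at hi
  rcases hx with rfl | rfl | rfl | rfl
  · exact P0other hi.1 hi.2
  · exact P1other hi.1 hi.2
  · exact P2other hi.1 hi.2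
  · exact P3other hi.1 hi.2

lemma base_key (htm : t ≠ m) (htC : t ∉ Finset.univ \ ({t, m} : Finset (Fin n))) :
    mcx (Finset.univ \ ({t, m} : Finset (Fin n))) t htC =
      Sw t (pvec t m) * Sw t (vx (pvec t m) (δ m)) := by
  have d02 : pvec t m ≠ vx (pvec t m) (δ m) :=
    ne_of_coord m (by rw [P0m, P2m]; exact Bool.false_ne_true)
  have d03 : pvec t m ≠ vx (vx (pvec t m) (δ m)) (δ t) :=
    ne_of_coord m (by rw [P0m, P3m htm]; exact Bool.false_ne_true)
  have d12 : vx (pvec t m) (δ t) ≠ vx (pvec t m) (δ m) :=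
    ne_of_coord t (by rw [P1t, P2t htm]; exact Ne.symm Bool.false_ne_true)
  have d13 : vx (pvec t m) (δ t) ≠ vx (vx (pvec t m) (δ m)) (δ t) :=
    ne_of_coord m (by rw [P1m htm, P3m htm]; exact Bool.false_ne_true)
  apply Equiv.ext; intro x
  rw [mcx_apply, mca_eq, Perm.mul_apply, Sw_def, Sw_def]
  rcases Bool.eq_false_or_eq_true
    (ctrl (Finset.univ \ ({t, m} : Finset (Fin n))) x) with hc | hc
  · rw [hc, cond_true]
    rcases ctrl_univ_eq_true htm hc with rfl | rfl | rfl | rfl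
    · rw [Equiv.swap_apply_of_ne_of_ne d02 d03, Equiv.swap_apply_left]
    · rw [Equiv.swap_apply_of_ne_of_ne d12 d13, Equiv.swap_apply_right, vx_cancel]
    · rw [Equiv.swap_apply_left,
        Equiv.swap_apply_of_ne_of_ne (Ne.symm d03) (Ne.symm d13)]
    · rw [Equiv.swap_apply_right,
        Equiv.swap_apply_of_ne_of_ne (Ne.symm d02) (Ne.symm d12), vx_cancel]
  · rw [hc, cond_false]
    have hcne : ctrl (Finset.univ \ ({t, m} : Finset (Fin n))) x ≠ true := by
      rw [hc]; exact Bool.false_ne_true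
    have hne0 : x ≠ pvec t m := fun e => hcne (ctrl_univ_of htm (Or.inl e))
    have hne1 : x ≠ vx (pvec t m) (δ t) := fun e =>
      hcne (ctrl_univ_of htm (Or.inr (Or.inl e)))
    have hne2 : x ≠ vx (pvec t m) (δ m) := fun e =>
      hcne (ctrl_univ_of htm (Or.inr (Or.inr (Or.inl e))))
    have hne3 : x ≠ vx (vx (pvec t m) (δ m)) (δ t) := fun e =>
      hcne (ctrl_univ_of htm (Or.inr (Or.inr (Or.inr e))))
    rw [Equiv.swap_apply_of_ne_of_ne hne2 hne3, Equiv.swap_apply_of_ne_of_ne hne0 hne1]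

end Pcoords

lemma base_pair (hn : 3 < n) {t m : Fin n} (htm : t ≠ m) (y : V n) :
    Sw t y * Sw t (vx y (δ m)) ∈ G n := by
  have htC : t ∉ Finset.univ \ ({t, m} : Finset (Fin n)) := by simp
  have hcard : (Finset.univ \ ({t, m} : Finset (Fin n))).card = n - 2 := by
    rw [Finset.card_sdiff_of_subset (Finset.subset_univ _), Finset.card_univ, Fintype.card_fin,
      Finset.card_pair htm]
  have hmem : mcx (Finset.univ \ ({t, m} : Finset (Fin n))) t htC ∈ G n :=
    mcx_mem n _ _ _ (by rw [hcard]; omega) (by rw [hcard]; omega)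
  rw [base_key htm htC] at hmem
  have h1 : tr (vx (pvec t m) y) * (Sw t (pvec t m) * Sw t (vx (pvec t m) (δ m))) *
      (tr (vx (pvec t m) y))⁻¹ ∈ G n :=
    mul_mem (mul_mem (tr_mem _) hmem) (inv_mem (tr_mem _))
  have h2 : tr (vx (pvec t m) y) * (Sw t (pvec t m) * Sw t (vx (pvec t m) (δ m))) *
      (tr (vx (pvec t m) y))⁻¹ = Sw t y * Sw t (vx y (δ m)) := by
    rw [show ∀ A B τ : Perm (V n), τ * (A * B) * τ⁻¹ = (τ * A * τ⁻¹) * (τ * B * τ⁻¹)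
      from fun A B τ => by group]
    rw [conj_Sw, conj_Sw, vx_cancel_left, vx_swap_cancel]
  rw [← h2]
  exact h1

lemma chain_degenerate {t : Fin n} {x y : V n}
    (he : (supp (vx x y)).erase t = ∅) : Sw t x * Sw t y ∈ G n := by
  have hsub : ∀ i, i ≠ t → (vx x y) i = false := by
    intro i hit
    rcases Bool.eq_false_or_eq_true ((vx x y) i) with hb | hb
    · exfalso
      have hmem : i ∈ (supp (vx x y)).erase t := Finset.mem_erase.2 ⟨hit, mem_supp.2 hb⟩
      rw [he] at hmem
      exact absurd hmem (Finset.notMem_empty i)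
    · exact hb
  have hy : y = x ∨ y = vx x (δ t) := by
    rcases Bool.eq_false_or_eq_true ((vx x y) t) with hb | hb
    · right
      have hd : vx x y = δ t := by
        funext i
        by_cases hit : i = t
        · rw [hit, hb, δ_self]
        · rw [hsub i hit, δ_ne hit]
      calc y = vx x (vx x y) := (vx_cancel_left x y).symm
      _ = vx x (δ t) := by rw [hd]
    · left
      have hz : vx x y = z := by
        funext i
        show vx x y i = false
        by_cases hit : i = t
        · rw [hit, hb]
        · exact hsub i hit
      exact (vx_eq_z hz).symm
  rcases hy with rfl | rfl
  · rw [Sw_def, Equiv.swap_mul_self]; exact one_mem _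
  · rw [Sw_shift, Sw_def, Equiv.swap_mul_self]; exact one_mem _

lemma chain (hn : 3 < n) (t : Fin n) :
    ∀ (N : ℕ) (x y : V n), ((supp (vx x y)).erase t).card ≤ N →
      Sw t x * Sw t y ∈ G n := by
  intro N
  induction N with
  | zero =>
    intro x y hc
    exact chain_degenerate (Finset.card_eq_zero.1 (le_antisymm hc (Nat.zero_le _)))
  | succ N ih =>
    intro x y hc
    rcases ((supp (vx x y)).erase t).eq_empty_or_nonempty with he | ⟨m, hm⟩
    · exact chain_degenerate he
    · rw [Finset.mem_erase] at hm
      have hxym : (vx x y) m = true := mem_supp.1 hm.2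
      have split : Sw t x * Sw t y =
          (Sw t x * Sw t (vx x (δ m))) * (Sw t (vx x (δ m)) * Sw t y) := by
        rw [mul_assoc, ← mul_assoc (Sw t (vx x (δ m))), Sw_def (x := vx x (δ m)),
          Equiv.swap_mul_self, one_mul]
      rw [split]
      refine mul_mem (base_pair hn (fun e : t = m => hm.1 e.symm) x) (ih (vx x (δ m)) y ?_)
      rw [vx_right_comm, supp_vx_δ hxym, Finset.erase_right_comm,
        Finset.card_erase_of_mem (Finset.mem_erase.2 hm)]
      omega

lemma vx_cancel_pq (a p q : V n) : vx (vx (vx a p) q) (vx p q) = a := by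
  funext i
  have hb : ∀ x u v : Bool, xor (xor (xor x u) v) (xor u v) = x := by decide
  exact hb _ _ _

lemma disj_swap {a b c d : V n} (h1 : a ≠ c) (h2 : a ≠ d) (h3 : b ≠ c) (h4 : b ≠ d) :
    Equiv.Perm.Disjoint (Equiv.swap a b) (Equiv.swap c d) := by
  intro x
  by_cases hxa : x = a
  · right; subst hxa; exact Equiv.swap_apply_of_ne_of_ne h1 h2
  · by_cases hxb : x = b
    · right; subst hxb; exact Equiv.swap_apply_of_ne_of_ne h3 h4
    · left; exact Equiv.swap_apply_of_ne_of_ne hxa hxb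

lemma cube_key (A B C F : Perm (V n)) (h1 : Commute C B) (h2 : Commute (A * B) (C * F))
    (h3 : (A * B) ^ 3 = 1) (h4 : C * C = 1) (h5 : F * F = 1) (h6 : Commute C F) :
    ((A * C) * (B * F)) ^ 3 = C * F := by
  have e1 : (A * C) * (B * F) = (A * B) * (C * F) := by
    calc (A * C) * (B * F) = A * (C * B) * F := by group
    _ = A * (B * C) * F := by rw [h1.eq]
    _ = (A * B) * (C * F) := by group
  rw [e1, h2.mul_pow, h3, one_mul]
  have e2 : (C * F) ^ 2 = 1 := by rw [h6.mul_pow, sq, h4, sq, h5, one_mul]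
  rw [pow_succ, e2, one_mul]

lemma mixed (hn : 3 < n) {t s : Fin n} (hts : t ≠ s) {c f : V n}
    (h1 : c ≠ f) (h2 : c ≠ vx f (δ s)) (h3 : vx c (δ t) ≠ f)
    (h4 : vx c (δ t) ≠ vx f (δ s)) :
    Sw t c * Sw s f ∈ G n := by
  classical
  set B0 : Finset (V n) := {c, vx c (δ t), f, vx f (δ s)} with hB0
  set B : Finset (V n) := B0 ∪ B0.image (fun b => vx b (δ t)) ∪
    B0.image (fun b => vx b (vx (δ t) (δ s))) with hB
  have h0 : B0.card ≤ 4 := by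
    apply le_trans (Finset.card_insert_le _ _)
    have := Finset.card_insert_le (vx c (δ t)) ({f, vx f (δ s)} : Finset (V n))
    have := Finset.card_insert_le f ({vx f (δ s)} : Finset (V n))
    have := Finset.card_singleton (vx f (δ s))
    omega
  have hcardB : B.card ≤ 12 := by
    have hi1 : (B0.image (fun b => vx b (δ t))).card ≤ 4 :=
      le_trans Finset.card_image_le h0
    have hi2 : (B0.image (fun b => vx b (vx (δ t) (δ s)))).card ≤ 4 :=
      le_trans Finset.card_image_le h0
    have hu1 := Finset.card_union_le B0 (B0.image (fun b => vx b (δ t)))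
    have hu2 := Finset.card_union_le (B0 ∪ B0.image (fun b => vx b (δ t)))
      (B0.image (fun b => vx b (vx (δ t) (δ s))))
    rw [hB]
    omega
  have hlt : B.card < Fintype.card (V n) := by
    have h16 : (16 : ℕ) ≤ 2 ^ n := by
      calc (16 : ℕ) = 2 ^ 4 := rfl
      _ ≤ 2 ^ n := Nat.pow_le_pow_right (by norm_num) (by omega)
    have hcV : Fintype.card (V n) = 2 ^ n := by
      rw [Fintype.card_fun, Fintype.card_bool, Fintype.card_fin]
    omega
  have hBne : B ≠ Finset.univ := fun e => by rw [e, Finset.card_univ] at hlt; omega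
  obtain ⟨a, -, ha⟩ := Finset.exists_of_ssubset (Finset.ssubset_univ_iff.2 hBne)
  have haB0 : a ∉ B0 := fun e =>
    ha (Finset.mem_union_left _ (Finset.mem_union_left _ e))
  have hbB0 : vx a (δ t) ∉ B0 := fun e => ha (by
    refine Finset.mem_union_left _ (Finset.mem_union_right _ ?_)
    exact Finset.mem_image.2 ⟨vx a (δ t), e, vx_cancel a (δ t)⟩)
  have heB0 : vx (vx a (δ t)) (δ s) ∉ B0 := fun e => ha (by
    refine Finset.mem_union_right _ ?_
    exact Finset.mem_image.2 ⟨vx (vx a (δ t)) (δ s), e, vx_cancel_pq a (δ t) (δ s)⟩)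
  have notB0 : ∀ {x : V n}, x ∉ B0 →
      x ≠ c ∧ x ≠ vx c (δ t) ∧ x ≠ f ∧ x ≠ vx f (δ s) := by
    intro x hx
    simp only [hB0, Finset.mem_insert, Finset.mem_singleton, not_or] at hx
    exact hx
  obtain ⟨ha1, ha2, ha3, ha4⟩ := notB0 haB0
  obtain ⟨hb1, hb2, hb3, hb4⟩ := notB0 hbB0
  obtain ⟨he1, he2, he3, he4⟩ := notB0 heB0
  have hab : a ≠ vx a (δ t) := (vx_ne t (δ_self t)).symm
  have hbe : vx a (δ t) ≠ vx (vx a (δ t)) (δ s) := (vx_ne s (δ_self s)).symm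
  have hae : a ≠ vx (vx a (δ t)) (δ s) :=
    ne_of_coord t (by cases hat : a t <;> simp [hat, hts])
  have hg : Sw t a * Sw t c ∈ G n := chain hn t _ a c le_rfl
  have hh : Sw s (vx a (δ t)) * Sw s f ∈ G n := chain hn s _ (vx a (δ t)) f le_rfl
  have hmem : ((Sw t a * Sw t c) * (Sw s (vx a (δ t)) * Sw s f)) ^ 3 ∈ G n :=
    pow_mem (mul_mem hg hh) 3
  have dCB : Equiv.Perm.Disjoint (Equiv.swap c (vx c (δ t)))
      (Equiv.swap (vx a (δ t)) (vx (vx a (δ t)) (δ s))) :=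
    (disj_swap hb1 hb2 he1 he2).symm
  have dAC : Equiv.Perm.Disjoint (Equiv.swap a (vx a (δ t)))
      (Equiv.swap c (vx c (δ t))) := disj_swap ha1 ha2 hb1 hb2
  have dAF : Equiv.Perm.Disjoint (Equiv.swap a (vx a (δ t)))
      (Equiv.swap f (vx f (δ s))) := disj_swap ha3 ha4 hb3 hb4
  have dBC : Equiv.Perm.Disjoint (Equiv.swap (vx a (δ t)) (vx (vx a (δ t)) (δ s)))
      (Equiv.swap c (vx c (δ t))) := disj_swap hb1 hb2 he1 he2
  have dBF : Equiv.Perm.Disjoint (Equiv.swap (vx a (δ t)) (vx (vx a (δ t)) (δ s)))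
      (Equiv.swap f (vx f (δ s))) := disj_swap hb3 hb4 he3 he4
  have dCF : Equiv.Perm.Disjoint (Equiv.swap c (vx c (δ t)))
      (Equiv.swap f (vx f (δ s))) := disj_swap h1 h2 h3 h4
  have h3c : Equiv.Perm.IsThreeCycle
      (Equiv.swap a (vx a (δ t)) * Equiv.swap (vx a (δ t)) (vx (vx a (δ t)) (δ s))) := by
    rw [Equiv.swap_comm a (vx a (δ t))]
    exact Equiv.Perm.isThreeCycle_swap_mul_swap_same (Ne.symm hab) hbe hae
  have hρ3 : (Equiv.swap a (vx a (δ t)) *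
      Equiv.swap (vx a (δ t)) (vx (vx a (δ t)) (δ s))) ^ 3 = 1 := by
    rw [← h3c.orderOf]
    exact pow_orderOf_eq_one _
  have hcalc : ((Sw t a * Sw t c) * (Sw s (vx a (δ t)) * Sw s f)) ^ 3 =
      Sw t c * Sw s f := by
    simp only [Sw_def]
    exact cube_key _ _ _ _ dCB.commute
      ((dAC.mul_left dBC).mul_right (dAF.mul_left dBF)).commute hρ3
      (Equiv.swap_mul_self _ _) (Equiv.swap_mul_self _ _) dCF.commute
  rw [hcalc] at hmem
  exact hmem

lemma theta (hn : 3 < n) {t s : Fin n} (hts : t ≠ s) (x : V n) :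
    Sw t x * Sw s (vx x (δ t)) ∈ G n := by
  classical
  set T : Finset (V n) := {x, vx x (δ t), vx (vx x (δ t)) (δ s)} with hT
  set B : Finset (V n) := T ∪ T.image (fun b => vx b (δ s)) with hB
  have h0 : T.card ≤ 3 := by
    apply le_trans (Finset.card_insert_le _ _)
    have := Finset.card_insert_le (vx x (δ t)) ({vx (vx x (δ t)) (δ s)} : Finset (V n))
    have := Finset.card_singleton (vx (vx x (δ t)) (δ s))
    omega
  have hcardB : B.card ≤ 6 := by
    have hi1 : (T.image (fun b => vx b (δ s))).card ≤ 3 :=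
      le_trans Finset.card_image_le h0
    have hu1 := Finset.card_union_le T (T.image (fun b => vx b (δ s)))
    rw [hB]
    omega
  have hlt : B.card < Fintype.card (V n) := by
    have h16 : (16 : ℕ) ≤ 2 ^ n := by
      calc (16 : ℕ) = 2 ^ 4 := rfl
      _ ≤ 2 ^ n := Nat.pow_le_pow_right (by norm_num) (by omega)
    have hcV : Fintype.card (V n) = 2 ^ n := by
      rw [Fintype.card_fun, Fintype.card_bool, Fintype.card_fin]
    omega
  have hBne : B ≠ Finset.univ := fun e => by rw [e, Finset.card_univ] at hlt; omega
  obtain ⟨f, -, hf⟩ := Finset.exists_of_ssubset (Finset.ssubset_univ_iff.2 hBne)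
  have hfT : f ∉ T := fun e => hf (Finset.mem_union_left _ e)
  have hfT' : vx f (δ s) ∉ T := fun e => hf (by
    refine Finset.mem_union_right _ ?_
    exact Finset.mem_image.2 ⟨vx f (δ s), e, vx_cancel f (δ s)⟩)
  have notT : ∀ {y : V n}, y ∉ T →
      y ≠ x ∧ y ≠ vx x (δ t) ∧ y ≠ vx (vx x (δ t)) (δ s) := by
    intro y hy
    simp only [hT, Finset.mem_insert, Finset.mem_singleton, not_or] at hy
    exact hy
  obtain ⟨hf1, hf2, hf3⟩ := notT hfT
  obtain ⟨hf1', hf2', hf3'⟩ := notT hfT'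
  have hmix : Sw t x * Sw s f ∈ G n :=
    mixed hn hts (Ne.symm hf1) (Ne.symm hf1') (Ne.symm hf2) (Ne.symm hf2')
  have hch : Sw s f * Sw s (vx x (δ t)) ∈ G n := chain hn s _ f (vx x (δ t)) le_rfl
  have e : (Sw t x * Sw s f) * (Sw s f * Sw s (vx x (δ t))) =
      Sw t x * Sw s (vx x (δ t)) := by
    rw [mul_assoc, Sw_def s f, Equiv.swap_mul_self_mul]
  rw [← e]
  exact mul_mem hmix hch

lemma all3 (hn : 3 < n) {u v w : V n} (huv : u ≠ v) (huw : u ≠ w) (hvw : v ≠ w) :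
    Equiv.swap u v * Equiv.swap v w ∈ G n := by
  have hk : (⟨0, by omega⟩ : Fin n) ≠ ⟨1, by omega⟩ := by
    simp [Fin.ext_iff]
  obtain ⟨g, hg, hgu, hgv, hgw⟩ := canon hn huv huw hvw ⟨0, by omega⟩ ⟨1, by omega⟩ hk
  have hθ : Sw ⟨0, by omega⟩ z * Sw ⟨1, by omega⟩ (vx z (δ ⟨0, by omega⟩)) ∈ G n :=
    theta hn hk z
  have e1 : Sw (⟨0, by omega⟩ : Fin n) z = Equiv.swap (g u) (g v) := by
    rw [Sw_def, z_vx, ← hgu, ← hgv]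
  have e2 : Sw (⟨1, by omega⟩ : Fin n) (vx z (δ ⟨0, by omega⟩)) =
      Equiv.swap (g v) (g w) := by
    rw [Sw_def, z_vx, ← hgw, ← hgv]
  rw [e1, e2, Equiv.swap_apply_apply, Equiv.swap_apply_apply] at hθ
  have e3 : (g * Equiv.swap u v * g⁻¹) * (g * Equiv.swap v w * g⁻¹) =
      g * (Equiv.swap u v * Equiv.swap v w) * g⁻¹ := by group
  rw [e3] at hθ
  have hfin := mul_mem (mul_mem (inv_mem hg) hθ) hg
  rwa [show g⁻¹ * (g * (Equiv.swap u v * Equiv.swap v w) * g⁻¹) * g =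
    Equiv.swap u v * Equiv.swap v w from by group] at hfin

lemma swap_pair_mem (hn : 3 < n) {σ τ : Perm (V n)} (hσ : σ.IsSwap) (hτ : τ.IsSwap) :
    σ * τ ∈ G n := by
  obtain ⟨a, b, hab, rfl⟩ := hσ
  obtain ⟨c, d, hcd, rfl⟩ := hτ
  by_cases heq : Equiv.swap c d = Equiv.swap a b
  · rw [heq, Equiv.swap_mul_self]; exact one_mem _
  · by_cases hbc : b = c
    · subst hbc
      have had : a ≠ d := fun e => heq (by rw [← e, Equiv.swap_comm])
      exact all3 hn hab had hcd
    · by_cases hbd : b = d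
      · subst hbd
        have hac : a ≠ c := fun e => heq (by rw [← e])
        rw [show Equiv.swap c b = Equiv.swap b c from Equiv.swap_comm c b]
        exact all3 hn hab hac hbc
      · by_cases hac : a = c
        · subst hac
          rw [show Equiv.swap a b = Equiv.swap b a from Equiv.swap_comm a b]
          exact all3 hn (Ne.symm hab) hbd hcd
        · by_cases had : a = d
          · subst had
            rw [show Equiv.swap a b = Equiv.swap b a from Equiv.swap_comm a b,
              show Equiv.swap c a = Equiv.swap a c from Equiv.swap_comm c a]
            exact all3 hn (Ne.symm hab) hbc hac
          · have e : Equiv.swap a b * Equiv.swap c d =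
                (Equiv.swap a b * Equiv.swap b c) * (Equiv.swap b c * Equiv.swap c d) := by
              rw [mul_assoc, Equiv.swap_mul_self_mul]
            rw [e]
            exact mul_mem (all3 hn hab hac hbc) (all3 hn hbc hbd hcd)

lemma prod_swaps_mem (hn : 3 < n) :
    ∀ (N : ℕ) (l : List (Perm (V n))), l.length ≤ N →
      (∀ g ∈ l, Equiv.Perm.IsSwap g) → Even l.length → l.prod ∈ G n := by
  intro N
  induction N with
  | zero =>
    intro l hl _ _
    have hnil : l = [] := List.eq_nil_of_length_eq_zero (by omega)
    rw [hnil, List.prod_nil]; exact one_mem _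
  | succ N ih =>
    intro l hl hsw hev
    rcases l with _ | ⟨a, _ | ⟨b, l'⟩⟩
    · rw [List.prod_nil]; exact one_mem _
    · exfalso
      rcases hev with ⟨m, hm⟩
      simp only [List.length_cons, List.length_nil] at hm
      omega
    · rw [List.prod_cons, List.prod_cons, ← mul_assoc]
      have hev' : Even l'.length := by
        rcases hev with ⟨m, hm⟩
        simp only [List.length_cons] at hm
        exact ⟨m - 1, by omega⟩
      refine mul_mem (swap_pair_mem hn (hsw a (by simp)) (hsw b (by simp)))
        (ih l' (by simp only [List.length_cons] at hl; omega)
          (fun g hg => hsw g (by simp [hg])) hev')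

lemma even_mem (hn : 3 < n) (σ : Perm (V n)) (hσ : Equiv.Perm.sign σ = 1) :
    σ ∈ G n := by
  obtain ⟨l, hl, hsw⟩ := (Equiv.Perm.truncSwapFactors σ).out
  have hs := Equiv.Perm.sign_prod_list_swap hsw
  rw [hl, hσ] at hs
  have heven : Even l.length := by
    by_contra hodd
    have hoddl : Odd l.length := Nat.not_even_iff_odd.1 hodd
    rw [hoddl.neg_one_pow] at hs
    exact (by decide : ¬((1 : ℤˣ) = -1)) hs
  rw [← hl]
  exact prod_swaps_mem hn l.length l le_rfl hsw heven

lemma mem_sign (hn : 3 < n) {σ : Perm (V n)} (hσ : σ ∈ G n) :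
    Equiv.Perm.sign σ = 1 := by
  refine Subgroup.closure_induction (fun x hx => sign_gen hn hx) (by simp)
    (fun x y _ _ ihx ihy => by rw [map_mul, ihx, ihy, one_mul])
    (fun x _ ihx => by rw [map_inv, ihx, inv_one]) hσ

section Bridge

variable {n : ℕ}

lemma gate_apply_eq (g : Rev.Gate n) : g.apply = ⇑(mcx g.I g.t g.t_not_mem) := rfl

lemma eval_cons (g : Rev.Gate n) (S : Rev.Circuit n) (x : V n) :
    Rev.Circuit.eval (g :: S) x = Rev.Circuit.eval S (g.apply x) := rfl

lemma eval_append (S T : Rev.Circuit n) (x : V n) :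
    Rev.Circuit.eval (S ++ T) x = Rev.Circuit.eval T (Rev.Circuit.eval S x) := by
  simp [Rev.Circuit.eval, List.foldl_append]

lemma gate_invol (g : Rev.Gate n) (x : V n) : g.apply (g.apply x) = x := by
  rw [gate_apply_eq]
  exact mca_mca g.t_not_mem x

lemma to_perm (S : Rev.Circuit n) : ∃ σ ∈ G n, ⇑σ = Rev.Circuit.eval S := by
  induction S with
  | nil => exact ⟨1, one_mem _, rfl⟩
  | cons g S ih =>
    obtain ⟨σ, hσ, hfun⟩ := ih
    refine ⟨σ * mcx g.I g.t g.t_not_mem, mul_mem hσ (gen_mem _ _ _ g.card_le), ?_⟩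
    funext x
    rw [Perm.mul_apply, eval_cons, ← hfun, ← gate_apply_eq]

lemma eval_reverse (S : Rev.Circuit n) :
    ∀ x, Rev.Circuit.eval S.reverse (Rev.Circuit.eval S x) = x := by
  induction S with
  | nil => intro x; rfl
  | cons g S ih =>
    intro x
    rw [List.reverse_cons, eval_cons, eval_append, ih]
    exact gate_invol g x

lemma of_mem {σ : Perm (V n)} (hσ : σ ∈ G n) :
    ∃ S : Rev.Circuit n, Rev.Circuit.eval S = ⇑σ := by
  refine Subgroup.closure_induction ?_ ?_ ?_ ?_ hσ
  · rintro x ⟨C, t, h, hc, rfl⟩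
    refine ⟨[⟨C, t, hc, h⟩], ?_⟩
    funext y
    exact congrFun (gate_apply_eq ⟨C, t, hc, h⟩) y
  · exact ⟨[], rfl⟩
  · rintro x y _ _ ⟨Sx, hSx⟩ ⟨Sy, hSy⟩
    refine ⟨Sy ++ Sx, ?_⟩
    funext v
    rw [eval_append, hSy, hSx, Perm.mul_apply]
  · rintro x - ⟨S, hS⟩
    refine ⟨S.reverse, ?_⟩
    funext v
    have h1 := eval_reverse S (x⁻¹ v)
    rw [hS] at h1
    rw [show x (x⁻¹ v) = v from x.apply_symm_apply v] at h1
    exact h1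

end Bridge

end RevAux

namespace Rev

/-- For `n > 3`, a transformation `f : 𝔹ⁿ → 𝔹ⁿ` is defined by some reversible circuit
with exactly `n` inputs (no additional inputs) if and only if `f` is an even
permutation of `𝔹ⁿ`. -/
theorem defined_iff_even_perm (n : ℕ) (hn : 3 < n)
    (f : (Fin n → Bool) → Fin n → Bool) :
    (∃ S : Circuit n, Circuit.eval S = f) ↔
      ∃ e : Equiv.Perm (Fin n → Bool), ⇑e = f ∧ Equiv.Perm.sign e = 1 := by
  constructor
  · rintro ⟨S, rfl⟩
    obtain ⟨σ, hσ, hfun⟩ := RevAux.to_perm S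
    exact ⟨σ, hfun, RevAux.mem_sign hn hσ⟩
  · rintro ⟨e, rfl, hsign⟩
    exact RevAux.of_mem (RevAux.even_mem hn e hsign)

end Rev
end
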